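/- arXiv:math/0412028 — 6 statements merged into one kernel-verified Lean document; each statement's English description precedes it below -/
import Mathlib

section
/- For every positive integer d, every v ∈ {0,1}^d with v ≠ 0, and every c ∈ ℝ^d, the maximum of the linear function x ↦ c·x over the revlex-initial 0/1-polytope P(v) equals max over q ∈ {1,…,s(v)} of ( Σ_{p=1}^{q−1} c_{sig_p(v)} + Σ_{i=0}^{sig_q(v)−1} max(c_i, 0) ). -/
open Finset

/-- The set of 0/1-vectors in ℝ^d. -/
def ZeroOne (d : ℕ) : Set (Fin d → ℝ) := {x | ∀ i, x i = 0 ∨ x i = 1}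

/-- `x` is reverse-lexicographically smaller than `y`:
there is an index `m` with `x m < y m` and `x i = y i` for all `i > m`
(equivalently, `x m < y m` for `m` the largest index where `x` and `y` differ). -/
def RlexLt {d : ℕ} (x y : Fin d → ℝ) : Prop :=
  ∃ m : Fin d, x m < y m ∧ ∀ i : Fin d, m < i → x i = y i

/-- `X(v)`: the 0/1-points revlex-smaller than `v`. -/
def Xset {d : ℕ} (v : Fin d → ℝ) : Set (Fin d → ℝ) :=
  {x | x ∈ ZeroOne d ∧ RlexLt x v}

/-- The revlex-initial 0/1-polytope `P(v) = conv X(v)`. -/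
noncomputable def Pset {d : ℕ} (v : Fin d → ℝ) : Set (Fin d → ℝ) :=
  convexHull ℝ (Xset v)

/-- `Sig(v)`: the support of `v` (the indices of its one-entries). -/
noncomputable def Sig {d : ℕ} (v : Fin d → ℝ) : Finset (Fin d) :=
  @Finset.filter (Fin d) (fun i => v i = 1) (Classical.decPred _) Finset.univ

/-- `Sig_{>i}(v)`: the elements of `Sig(v)` above `i`. -/
noncomputable def SigGt {d : ℕ} (v : Fin d → ℝ) (i : Fin d) : Finset (Fin d) :=
  (Sig v).filter (fun j => i < j)

/-- The dimension of the affine hull of a set in ℝ^d. -/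
noncomputable def adim {d : ℕ} (s : Set (Fin d → ℝ)) : ℕ :=
  Module.finrank ℝ (affineSpan ℝ s).direction

/-- A face of a polytope: a convex extreme subset. -/
def IsFaceOf {d : ℕ} (P F : Set (Fin d → ℝ)) : Prop :=
  Convex ℝ F ∧ IsExtreme ℝ P F

/-- The number of indices satisfying a predicate. -/
noncomputable def cnt {d : ℕ} (p : Fin d → Prop) : ℕ :=
  (@Finset.filter (Fin d) p (Classical.decPred _) Finset.univ).card

lemma sum_split {d : ℕ} (v : Fin d → ℝ) (hv : v ∈ ZeroOne d) (c : Fin d → ℝ)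
    (x : Fin d → ℝ) (m : Fin d) (hxm : x m = 0)
    (hagree : ∀ i, m < i → x i = v i) :
    ∑ i, c i * x i =
      (∑ j ∈ (Sig v).filter (fun j => m < j), c j) +
      ∑ i ∈ Finset.univ.filter (fun i : Fin d => i < m), c i * x i := by
  classical
  rw [← Finset.sum_filter_add_sum_filter_not Finset.univ (fun i => m < i) (fun i => c i * x i)]
  congr 1
  · have h1 : ∑ i ∈ Finset.univ.filter (fun i => m < i), c i * x i
        = ∑ i ∈ Finset.univ.filter (fun i => m < i), c i * v i := by
      refine Finset.sum_congr rfl fun i hi => ?_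
      rw [hagree i (Finset.mem_filter.mp hi).2]
    rw [h1]
    have h2 : (Sig v).filter (fun j => m < j)
        = (Finset.univ.filter (fun i => m < i)).filter (fun i => v i = 1) := by
      unfold Sig
      rw [Finset.filter_filter, Finset.filter_filter]
      apply Finset.filter_congr
      intro i _
      simp [and_comm]
    rw [h2, eq_comm]
    rw [← Finset.sum_filter_of_ne (s := Finset.univ.filter (fun i => m < i))
      (p := fun i => v i = 1) (f := fun i => c i * v i)]
    · refine Finset.sum_congr rfl fun i hi => ?_
      rw [(Finset.mem_filter.mp hi).2, mul_one]
    · intro i _ hne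
      rcases hv i with h | h
      · rw [h, mul_zero] at hne; exact absurd rfl hne
      · exact h
  · have h3 : Finset.univ.filter (fun i : Fin d => ¬ m < i)
        = insert m (Finset.univ.filter (fun i : Fin d => i < m)) := by
      ext i
      simp only [Finset.mem_filter, Finset.mem_univ, true_and, Finset.mem_insert, not_lt]
      constructor
      · intro h; rcases lt_or_eq_of_le h with h' | h'
        · exact Or.inr h'
        · exact Or.inl h'
      · rintro (rfl | h); · exact le_refl _
        · exact le_of_lt h
    rw [h3, Finset.sum_insert (by simp), hxm, mul_zero, zero_add]

lemma image_Icc {d : ℕ} (w : ℕ) (v : Fin d → ℝ) (sig : ℕ → Fin d)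
    (hanti : StrictAntiOn sig (Set.Icc 1 w))
    (himg : ∀ j : Fin d, j ∈ Sig v ↔ ∃ q, 1 ≤ q ∧ q ≤ w ∧ sig q = j)
    (q : ℕ) (hq1 : 1 ≤ q) (hqw : q ≤ w) (c : Fin d → ℝ) :
    ∑ p ∈ Finset.Icc 1 (q-1), c (sig p) = ∑ j ∈ (Sig v).filter (fun j => sig q < j), c j := by
  classical
  have hmem : ∀ p, 1 ≤ p → p ≤ q - 1 → sig q < sig p := by
    intro p h1 h2
    have hpq : p < q := lt_of_le_of_lt h2 (Nat.sub_lt (lt_of_lt_of_le Nat.zero_lt_one hq1) Nat.one_pos)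
    exact hanti ⟨h1, le_trans (le_of_lt hpq) hqw⟩ ⟨hq1, hqw⟩ hpq
  have himage : (Finset.Icc 1 (q-1)).image sig = (Sig v).filter (fun j => sig q < j) := by
    ext j
    simp only [Finset.mem_image, Finset.mem_filter, Finset.mem_Icc]
    constructor
    · rintro ⟨p, ⟨h1, h2⟩, rfl⟩
      have hpw : p ≤ w := le_trans h2 (le_trans (Nat.sub_le q 1) hqw)
      exact ⟨(himg (sig p)).mpr ⟨p, h1, hpw, rfl⟩, hmem p h1 h2⟩
    · rintro ⟨hj, hlt⟩
      obtain ⟨p, h1, h2, rfl⟩ := (himg j).mp hj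
      refine ⟨p, ⟨h1, ?_⟩, rfl⟩
      have hpq : p < q := by
        by_contra hle
        push_neg at hle
        rcases lt_or_eq_of_le hle with h | h
        · exact absurd (hanti ⟨hq1, hqw⟩ ⟨h1, h2⟩ h) (lt_asymm hlt)
        · rw [h] at hlt; exact lt_irrefl _ hlt
      omega
  rw [← himage, Finset.sum_image]
  intro a ha b hb hab
  simp only [Finset.mem_coe, Finset.coe_Icc, Set.mem_Icc, Finset.mem_Icc] at ha hb
  exact hanti.injOn ⟨ha.1, by omega⟩ ⟨hb.1, by omega⟩ hab


/-- the maximum of `x ↦ c·x` over `P(v)` equals the maximum over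
`q ∈ {1,…,s(v)}` of `Σ_{p=1}^{q−1} c_{sig_p(v)} + Σ_{i<sig_q(v)} max(c_i,0)`,
where `sig` is the decreasing enumeration of `Sig(v)`. -/
theorem stmt0 (d : ℕ) (hd : 0 < d) (v : Fin d → ℝ) (hv : v ∈ ZeroOne d) (hv0 : v ≠ 0)
    (c : Fin d → ℝ)
    (w : ℕ) (hw : w = (Sig v).card)
    (sig : ℕ → Fin d)
    (hanti : StrictAntiOn sig (Set.Icc 1 w))
    (himg : ∀ j : Fin d, j ∈ Sig v ↔ ∃ q, 1 ≤ q ∧ q ≤ w ∧ sig q = j) :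
    IsGreatest {t : ℝ | ∃ x ∈ Pset v, t = ∑ i, c i * x i}
      (sSup {t : ℝ | ∃ q, 1 ≤ q ∧ q ≤ w ∧
        t = (∑ p ∈ Finset.Icc 1 (q - 1), c (sig p)) +
            ∑ i ∈ Finset.univ.filter (fun j : Fin d => (j : ℕ) < (sig q : ℕ)), max (c i) 0}) := by
  classical
  set g : ℕ → ℝ := fun q => (∑ p ∈ Finset.Icc 1 (q - 1), c (sig p)) +
      ∑ i ∈ Finset.univ.filter (fun j : Fin d => (j : ℕ) < (sig q : ℕ)), max (c i) 0 with hg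
  set T : Set ℝ := {t : ℝ | ∃ q, 1 ≤ q ∧ q ≤ w ∧ t = g q} with hT
  -- w ≥ 1
  have hw1 : 1 ≤ w := by
    rw [hw]
    rcases Finset.eq_empty_or_nonempty (Sig v) with h | h
    · exfalso
      apply hv0
      funext i
      have : i ∉ Sig v := by rw [h]; exact Finset.notMem_empty i
      rcases hv i with h0 | h1
      · exact h0
      · exact absurd (Finset.mem_filter.mpr ⟨Finset.mem_univ i, h1⟩) this
    · exact Finset.Nonempty.card_pos h
  have hTeq : T = g '' Set.Icc 1 w := by
    ext t
    simp only [hT, Set.mem_setOf_eq, Set.mem_image, Set.mem_Icc]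
    constructor
    · rintro ⟨q, h1, h2, rfl⟩; exact ⟨q, ⟨h1, h2⟩, rfl⟩
    · rintro ⟨q, ⟨h1, h2⟩, rfl⟩; exact ⟨q, h1, h2, rfl⟩
  have hTfin : T.Finite := by rw [hTeq]; exact (Set.finite_Icc 1 w).image g
  have hTne : T.Nonempty := ⟨g 1, 1, le_refl 1, hw1, rfl⟩
  have hMmem : sSup T ∈ T := hTne.csSup_mem hTfin
  have hub : ∀ q, 1 ≤ q → q ≤ w → g q ≤ sSup T := fun q h1 h2 =>
    le_csSup hTfin.bddAbove ⟨q, h1, h2, rfl⟩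
  -- filter equality helper
  have hfilt : ∀ m : Fin d, Finset.univ.filter (fun j : Fin d => (j : ℕ) < (m : ℕ))
      = Finset.univ.filter (fun j : Fin d => j < m) := by
    intro m; apply Finset.filter_congr; intro i _; exact Iff.rfl
  -- key value formula for points of Xset
  have hkey : ∀ x ∈ Xset v, ∃ q, 1 ≤ q ∧ q ≤ w ∧
      ∑ i, c i * x i = (∑ p ∈ Finset.Icc 1 (q - 1), c (sig p)) +
        ∑ i ∈ Finset.univ.filter (fun i : Fin d => i < sig q), c i * x i := by
    rintro x ⟨hx01, m, hlt, hagree⟩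
    have hxm : x m = 0 ∧ v m = 1 := by
      rcases hx01 m with h | h <;> rcases hv m with h' | h' <;>
        rw [h, h'] at hlt
      · exact absurd hlt (lt_irrefl 0)
      · exact ⟨h, h'⟩
      · exact absurd hlt (by norm_num)
      · exact absurd hlt (lt_irrefl 1)
    obtain ⟨q, hq1, hqw, hsq⟩ := (himg m).mp
      (Finset.mem_filter.mpr ⟨Finset.mem_univ m, hxm.2⟩)
    refine ⟨q, hq1, hqw, ?_⟩
    rw [sum_split v hv c x m hxm.1 hagree,
      image_Icc w v sig hanti himg q hq1 hqw c, hsq]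
  constructor
  · -- sSup T is attained
    obtain ⟨q, hq1, hqw, hMeq⟩ := hMmem
    have hvq : v (sig q) = 1 := by
      have := (himg (sig q)).mpr ⟨q, hq1, hqw, rfl⟩
      exact (Finset.mem_filter.mp this).2
    set y : Fin d → ℝ := fun i =>
      if sig q < i then v i else if i < sig q ∧ 0 < c i then 1 else 0 with hy
    have hy01 : y ∈ ZeroOne d := by
      intro i
      simp only [hy]
      split_ifs with h1 h2
      · exact hv i
      · right; rfl
      · left; rfl
    have hym : y (sig q) = 0 := by simp [hy]
    have hagree : ∀ i, sig q < i → y i = v i := by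
      intro i hi; simp [hy, hi]
    have hyX : y ∈ Xset v := by
      refine ⟨hy01, sig q, ?_, hagree⟩
      rw [hym, hvq]; norm_num
    have hval : ∑ i, c i * y i = g q := by
      rw [sum_split v hv c y (sig q) hym hagree,
        ← image_Icc w v sig hanti himg q hq1 hqw c]
      show _ = (∑ p ∈ Finset.Icc 1 (q - 1), c (sig p)) +
          ∑ i ∈ Finset.univ.filter (fun j : Fin d => (j : ℕ) < (sig q : ℕ)), max (c i) 0
      rw [hfilt (sig q)]
      congr 1
      refine Finset.sum_congr rfl fun i hi => ?_
      have him : i < sig q := (Finset.mem_filter.mp hi).2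
      have hnot : ¬ sig q < i := not_lt.mpr (le_of_lt him)
      by_cases hc : 0 < c i
      · simp [hy, hnot, him, hc, max_eq_left (le_of_lt hc)]
      · simp [hy, hnot, him, hc, max_eq_right (not_lt.mp hc)]
    exact ⟨y, subset_convexHull ℝ _ hyX, by rw [hval, hMeq]⟩
  · -- upper bound
    rintro t ⟨x, hxP, rfl⟩
    have hconv : Convex ℝ {z : Fin d → ℝ | ∑ i, c i * z i ≤ sSup T} := by
      apply convex_halfSpace_le
      constructor
      · intro a b; simp [mul_add, Finset.sum_add_distrib]
      · intro r a; simp [Finset.mul_sum, mul_left_comm]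
    have hsub : Xset v ⊆ {z : Fin d → ℝ | ∑ i, c i * z i ≤ sSup T} := by
      intro z hz
      obtain ⟨q, hq1, hqw, heq⟩ := hkey z hz
      have hb : ∑ i ∈ Finset.univ.filter (fun i : Fin d => i < sig q), c i * z i
          ≤ ∑ i ∈ Finset.univ.filter (fun i : Fin d => i < sig q), max (c i) 0 := by
        refine Finset.sum_le_sum fun i _ => ?_
        rcases hz.1 i with h | h
        · rw [h, mul_zero]; exact le_max_right _ _
        · rw [h, mul_one]; exact le_max_left _ _
      have : ∑ i, c i * z i ≤ g q := by
        rw [heq]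
        show _ ≤ (∑ p ∈ Finset.Icc 1 (q - 1), c (sig p)) +
            ∑ i ∈ Finset.univ.filter (fun j : Fin d => (j : ℕ) < (sig q : ℕ)), max (c i) 0
        rw [hfilt (sig q)]
        exact add_le_add_right hb _
      exact le_trans this (hub q hq1 hqw)
    exact convexHull_min hsub hconv hxP
end

section
/- For every positive integer d and every v ∈ {0,1}^d with v ≠ 0, the revlex-initial 0/1-polytope P(v) equals the set of all x ∈ ℝ^d satisfying: 0 ≤ x_i ≤ 1 for all i ∈ {0,…,d−1}; x_i + Σ_{j ∈ Sig_{>i}(v)} x_j ≤ |Sig_{>i}(v)| for all i ∈ coSig(v); and Σ_{j ∈ Sig(v)} x_j ≤ s(v) − 1. -/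
open Finset

/-! ### Auxiliary -/

def Qset {d : ℕ} (v : Fin d → ℝ) : Set (Fin d → ℝ) :=
  {x : Fin d → ℝ |
      (∀ i, 0 ≤ x i ∧ x i ≤ 1) ∧
      (∀ i : Fin d, i ∉ Sig v → x i + ∑ j ∈ SigGt v i, x j ≤ ((SigGt v i).card : ℝ)) ∧
      (∑ j ∈ Sig v, x j ≤ ((Sig v).card : ℝ) - 1)}

lemma mem_Sig {d : ℕ} {v : Fin d → ℝ} {i : Fin d} : i ∈ Sig v ↔ v i = 1 := by
  simp [Sig]

lemma lt01 {d : ℕ} {x v : Fin d → ℝ} (hx : x ∈ ZeroOne d) (hv : v ∈ ZeroOne d)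
    {m : Fin d} (h : x m < v m) : x m = 0 ∧ v m = 1 := by
  rcases hx m with h1 | h1 <;> rcases hv m with h2 | h2 <;>
    rw [h1, h2] at h <;> first
      | (exfalso; linarith)
      | exact ⟨h1, h2⟩

lemma Qset_convex {d : ℕ} (v : Fin d → ℝ) : Convex ℝ (Qset v) := by
  intro x hx y hy a b ha hb hab
  obtain ⟨hx1, hx2, hx3⟩ := hx
  obtain ⟨hy1, hy2, hy3⟩ := hy
  have hcomb : ∀ (p q c : ℝ), p ≤ c → q ≤ c → a * p + b * q ≤ c := by
    intro p q c hp hq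
    calc a * p + b * q ≤ a * c + b * c := by
          apply add_le_add <;> apply mul_le_mul_of_nonneg_left <;> assumption
      _ = c := by rw [← add_mul, hab, one_mul]
  refine ⟨fun i => ?_, fun i hi => ?_, ?_⟩
  · constructor
    · have := (hx1 i).1; have := (hy1 i).1
      have : 0 ≤ a * x i + b * y i := by positivity
      simpa using this
    · have := hcomb (x i) (y i) 1 (hx1 i).2 (hy1 i).2
      simpa using this
  · have hs : ∀ z : Fin d → ℝ, (a • x + b • y) i + ∑ j ∈ SigGt v i, (a • x + b • y) j
        = a * (x i + ∑ j ∈ SigGt v i, x j) + b * (y i + ∑ j ∈ SigGt v i, y j) := by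
      intro z
      simp only [Pi.add_apply, Pi.smul_apply, smul_eq_mul]
      rw [Finset.sum_add_distrib, ← Finset.mul_sum, ← Finset.mul_sum]
      ring
    rw [hs x]
    exact hcomb _ _ _ (hx2 i hi) (hy2 i hi)
  · have hs : ∑ j ∈ Sig v, (a • x + b • y) j
        = a * (∑ j ∈ Sig v, x j) + b * (∑ j ∈ Sig v, y j) := by
      simp only [Pi.add_apply, Pi.smul_apply, smul_eq_mul]
      rw [Finset.sum_add_distrib, ← Finset.mul_sum, ← Finset.mul_sum]
    rw [hs]
    exact hcomb _ _ _ hx3 hy3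

lemma Xset_subset_Qset {d : ℕ} (v : Fin d → ℝ) (hv : v ∈ ZeroOne d) :
    Xset v ⊆ Qset v := by
  rintro x ⟨hx01, m, hm, hmgt⟩
  obtain ⟨hxm, hvm⟩ := lt01 hx01 hv hm
  have hmS : m ∈ Sig v := mem_Sig.2 hvm
  have hx0 : ∀ i, 0 ≤ x i := fun i => by rcases hx01 i with h | h <;> rw [h] <;> norm_num
  have hx1 : ∀ i, x i ≤ 1 := fun i => by rcases hx01 i with h | h <;> rw [h] <;> norm_num
  have hsum_le : ∀ (s : Finset (Fin d)), ∑ j ∈ s, x j ≤ (s.card : ℝ) := by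
    intro s
    calc ∑ j ∈ s, x j ≤ ∑ j ∈ s, (1 : ℝ) := Finset.sum_le_sum (fun j _ => hx1 j)
      _ = (s.card : ℝ) := by simp
  have hsum_lt : ∀ (s : Finset (Fin d)), m ∈ s → ∑ j ∈ s, x j ≤ (s.card : ℝ) - 1 := by
    intro s hms
    have : ∑ j ∈ s, x j = x m + ∑ j ∈ s.erase m, x j := (Finset.add_sum_erase s x hms).symm
    rw [this, hxm, zero_add]
    have h1 : (1 : ℕ) ≤ s.card := Finset.card_pos.2 ⟨m, hms⟩
    calc ∑ j ∈ s.erase m, x j ≤ ((s.erase m).card : ℝ) := hsum_le _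
      _ = (s.card : ℝ) - 1 := by
          rw [Finset.card_erase_of_mem hms]
          push_cast [h1]
          ring
  refine ⟨fun i => ⟨hx0 i, hx1 i⟩, fun i hi => ?_, hsum_lt _ hmS⟩
  rcases lt_trichotomy i m with hlt | heq | hgt
  · have hmGt : m ∈ SigGt v i := by
      simp only [SigGt, Finset.mem_filter]
      exact ⟨hmS, hlt⟩
    have := hsum_lt _ hmGt
    have := hx1 i
    linarith
  · exact absurd (heq ▸ hmS) hi
  · have hxi : x i = 0 := by
      have := hmgt i hgt
      rcases hv i with h | h
      · rw [this, h]
      · exact absurd (mem_Sig.2 h) hi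
    rw [hxi, zero_add]
    exact hsum_le _


noncomputable def semb {d : ℕ} (v : Fin d → ℝ) : Fin (Sig v).card ↪o Fin d :=
  (Sig v).orderEmbOfFin rfl

noncomputable def tau {d : ℕ} (v : Fin d → ℝ) (i : Fin d) : ℕ :=
  ((Sig v).filter (fun j => j ≤ i)).card

lemma semb_mem {d : ℕ} (v : Fin d → ℝ) (r : Fin (Sig v).card) : semb v r ∈ Sig v :=
  Finset.orderEmbOfFin_mem _ _ _

lemma semb_surj {d : ℕ} (v : Fin d → ℝ) {i : Fin d} (hi : i ∈ Sig v) :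
    ∃ r, semb v r = i := by
  have := Finset.range_orderEmbOfFin (Sig v) (rfl : (Sig v).card = (Sig v).card)
  have : i ∈ Set.range (semb v) := by rw [semb, this]; exact hi
  exact this

lemma L1 {d : ℕ} (v : Fin d → ℝ) (r : Fin (Sig v).card) (i : Fin d) :
    semb v r ≤ i ↔ (r : ℕ) < tau v i := by
  constructor
  · intro h
    have hsub : (Finset.Iic r).image (semb v) ⊆ (Sig v).filter (fun j => j ≤ i) := by
      intro j hj
      simp only [Finset.mem_image, Finset.mem_Iic] at hj
      obtain ⟨r', hr', rfl⟩ := hj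
      refine Finset.mem_filter.2 ⟨semb_mem v r', le_trans ((semb v).monotone hr') h⟩
    have hcard := Finset.card_le_card hsub
    rw [Finset.card_image_of_injective _ (semb v).injective, Fin.card_Iic] at hcard
    exact hcard
  · intro h
    by_contra hle
    push_neg at hle
    have hsub : (Sig v).filter (fun j => j ≤ i) ⊆ (Finset.Iio r).image (semb v) := by
      intro j hj
      rw [Finset.mem_filter] at hj
      obtain ⟨r', rfl⟩ := semb_surj v hj.1
      have : r' < r := by
        by_contra hge
        push_neg at hge
        exact absurd (le_trans ((semb v).monotone hge) hj.2) (not_le.2 hle)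
      exact Finset.mem_image.2 ⟨r', Finset.mem_Iio.2 this, rfl⟩
    have hcard := Finset.card_le_card hsub
    rw [Finset.card_image_of_injective _ (semb v).injective, Fin.card_Iio] at hcard
    exact absurd h (not_lt.2 hcard)

lemma L1' {d : ℕ} (v : Fin d → ℝ) (r : Fin (Sig v).card) (i : Fin d) :
    i < semb v r ↔ tau v i ≤ (r : ℕ) := by
  rw [← not_le, L1, not_lt]

lemma tau_le {d : ℕ} (v : Fin d → ℝ) (i : Fin d) : tau v i ≤ (Sig v).card :=
  Finset.card_le_card (Finset.filter_subset _ _)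

lemma tau_semb {d : ℕ} (v : Fin d → ℝ) (r : Fin (Sig v).card) :
    tau v (semb v r) = (r : ℕ) + 1 := by
  have h1 : (r : ℕ) < tau v (semb v r) := (L1 v r _).1 le_rfl
  rcases Nat.lt_or_ge ((r : ℕ) + 1) (Sig v).card with h | h
  · have h2 : tau v (semb v r) ≤ (r : ℕ) + 1 := by
      have := (L1' v ⟨(r : ℕ) + 1, h⟩ (semb v r)).1
        ((semb v).strictMono (show r < ⟨(r : ℕ) + 1, h⟩ from by simp [Fin.lt_def]))
      simpa using this
    omega
  · have := tau_le v (semb v r)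
    omega

/-- Translation of sums over `SigGt` to sums over `Ico`. -/
lemma sum_SigGt {d : ℕ} (v : Fin d → ℝ) (F : Fin d → ℝ) (i : Fin d) :
    ∑ j ∈ SigGt v i, F j
      = ∑ n ∈ Finset.Ico (tau v i) (Sig v).card,
          (if h : n < (Sig v).card then F (semb v ⟨n, h⟩) else 0) := by
  have h1 : SigGt v i
      = (Finset.univ.filter (fun r : Fin (Sig v).card => tau v i ≤ (r : ℕ))).image (semb v) := by
    ext j
    simp only [SigGt, Finset.mem_filter, Finset.mem_image, Finset.mem_univ, true_and]
    constructor
    · rintro ⟨hj, hij⟩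
      obtain ⟨r, rfl⟩ := semb_surj v hj
      exact ⟨r, (L1' v r i).1 hij, rfl⟩
    · rintro ⟨r, hr, rfl⟩
      exact ⟨semb_mem v r, (L1' v r i).2 hr⟩
  rw [h1, Finset.sum_image (fun a _ b _ h => (semb v).injective h), Finset.sum_filter]
  have e1 : ∀ a : Fin (Sig v).card,
      (if tau v i ≤ (a : ℕ) then F (semb v a) else 0)
        = (fun n => if tau v i ≤ n then
            (if h : n < (Sig v).card then F (semb v ⟨n, h⟩) else 0) else 0) (a : ℕ) := by
    intro a
    simp [a.isLt]
  rw [Finset.sum_congr rfl (fun a _ => e1 a), Fin.sum_univ_eq_sum_range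
    (fun n => if tau v i ≤ n then
      (if h : n < (Sig v).card then F (semb v ⟨n, h⟩) else 0) else 0) (Sig v).card,
    ← Finset.sum_filter]
  congr 1
  ext n
  simp only [Finset.mem_filter, Finset.mem_range, Finset.mem_Ico]
  omega

lemma card_SigGt {d : ℕ} (v : Fin d → ℝ) (i : Fin d) :
    ((SigGt v i).card : ℝ) = ((Sig v).card : ℝ) - tau v i := by
  have h := sum_SigGt v (fun _ => (1 : ℝ)) i
  simp only [Finset.sum_const, nsmul_eq_mul, mul_one] at h
  have h2 : ∑ n ∈ Finset.Ico (tau v i) (Sig v).card,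
      (if h : n < (Sig v).card then (1 : ℝ) else 0)
        = ∑ n ∈ Finset.Ico (tau v i) (Sig v).card, (1 : ℝ) := by
    apply Finset.sum_congr rfl
    intro n hn
    rw [dif_pos (Finset.mem_Ico.1 hn).2]
  rw [h2] at h
  simp only [Finset.sum_const, nsmul_eq_mul, mul_one, Nat.card_Ico] at h
  rw [h, Nat.cast_sub (tau_le v i)]

section core
variable {d : ℕ} (v x : Fin d → ℝ)

noncomputable def XV (n : ℕ) : ℝ :=
  if h : n < (Sig v).card then x (semb v ⟨n, h⟩) else 0

noncomputable def mu (n : ℕ) : ℝ := ∑ r ∈ Finset.Ico n (Sig v).card, (1 - XV v x r)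

noncomputable def gg (n : ℕ) : ℝ := min (mu v x n) 1

noncomputable def lam (n : ℕ) : ℝ := gg v x n - gg v x (n + 1)

noncomputable def cc (j : ℕ) : ℝ :=
  if gg v x (j + 1) = 0 then 0 else (XV v x j - 1 + gg v x j) / gg v x (j + 1)

noncomputable def ee (i : Fin d) : ℝ :=
  if gg v x (tau v i) = 0 then 0 else x i / gg v x (tau v i)

variable {v x}
variable (hx01 : ∀ i, 0 ≤ x i ∧ x i ≤ 1)
include hx01

lemma XV_bounds (n : ℕ) (hn : n < (Sig v).card) : 0 ≤ XV v x n ∧ XV v x n ≤ 1 := by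
  rw [XV, dif_pos hn]; exact hx01 _

lemma mu_nonneg (n : ℕ) : 0 ≤ mu v x n := by
  apply Finset.sum_nonneg
  intro r hr
  have := (XV_bounds hx01 r (Finset.mem_Ico.1 hr).2).2
  linarith

lemma mu_antitone (n : ℕ) : mu v x (n + 1) ≤ mu v x n := by
  apply Finset.sum_le_sum_of_subset_of_nonneg
  · apply Finset.Ico_subset_Ico_left; omega
  · intro r hr _
    have := (XV_bounds hx01 r (Finset.mem_Ico.1 hr).2).2
    linarith

omit hx01 in lemma mu_rec (n : ℕ) (hn : n < (Sig v).card) :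
    mu v x n = (1 - XV v x n) + mu v x (n + 1) := by
  rw [mu, mu, Finset.sum_eq_sum_Ico_succ_bot hn]

omit hx01 in lemma mu_top : mu v x (Sig v).card = 0 := by
  rw [mu, Finset.Ico_self, Finset.sum_empty]

lemma gg_nonneg (n : ℕ) : 0 ≤ gg v x n := le_min (mu_nonneg hx01 n) zero_le_one

omit hx01 in lemma gg_le_one (n : ℕ) : gg v x n ≤ 1 := min_le_right _ _

omit hx01 in lemma gg_top : gg v x (Sig v).card = 0 := by
  rw [gg, mu_top]; simp

lemma gg_antitone (n : ℕ) : gg v x (n + 1) ≤ gg v x n :=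
  min_le_min (mu_antitone hx01 n) le_rfl

lemma lam_nonneg (n : ℕ) : 0 ≤ lam v x n := sub_nonneg.2 (gg_antitone hx01 n)

omit hx01 in lemma TEL (a b : ℕ) (hab : a ≤ b) :
    ∑ r ∈ Finset.Ico a b, lam v x r = gg v x a - gg v x b := by
  induction b, hab using Nat.le_induction with
  | base => simp
  | succ b hab ih =>
      rw [Finset.sum_Ico_succ_top hab, ih, lam]; ring

omit hx01 in lemma gg_eq_zero {n : ℕ} (h : gg v x n = 0) : mu v x n = 0 := by
  rcases min_cases (mu v x n) 1 with ⟨h1, _⟩ | ⟨h1, _⟩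
  · rw [gg, h1] at h; exact h
  · rw [gg, h1] at h; norm_num at h

lemma cc_identity (j : ℕ) (hj : j < (Sig v).card) :
    (1 - gg v x j) + cc v x j * gg v x (j + 1) = XV v x j := by
  obtain ⟨hX0, hX1⟩ := XV_bounds hx01 j hj
  by_cases h : gg v x (j + 1) = 0
  · rw [cc, if_pos h, h, mul_zero, add_zero]
    have hmu : mu v x (j + 1) = 0 := gg_eq_zero h
    have : mu v x j = 1 - XV v x j := by rw [mu_rec j hj, hmu]; ring
    have : gg v x j = 1 - XV v x j := by
      rw [gg, this, min_eq_left (by linarith)]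
    rw [this]; ring
  · rw [cc, if_neg h, div_mul_cancel₀ _ h]; ring

lemma cc_bounds (j : ℕ) (hj : j < (Sig v).card) : 0 ≤ cc v x j ∧ cc v x j ≤ 1 := by
  obtain ⟨hX0, hX1⟩ := XV_bounds hx01 j hj
  by_cases h : gg v x (j + 1) = 0
  · rw [cc, if_pos h]; norm_num
  · have hpos : 0 < gg v x (j + 1) := lt_of_le_of_ne (gg_nonneg hx01 _) (Ne.symm h)
    have hrec := mu_rec (v := v) (x := x) j hj
    have hmu1 : 0 ≤ mu v x (j + 1) := mu_nonneg hx01 _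
    have hggj : 1 - XV v x j ≤ gg v x j := by
      apply le_min <;> [linarith; linarith]
    have hnum : 0 ≤ XV v x j - 1 + gg v x j := by linarith
    have hup : XV v x j - 1 + gg v x j ≤ gg v x (j + 1) := by
      apply le_min
      · have : gg v x j ≤ mu v x j := min_le_left _ _
        linarith
      · have : gg v x j ≤ 1 := gg_le_one _
        linarith
    rw [cc, if_neg h]
    constructor
    · positivity
    · rw [div_le_one hpos]; exact hup

lemma ee_identity (i : Fin d) (hle : x i ≤ mu v x (tau v i)) :
    ee v x i * gg v x (tau v i) = x i := by
  by_cases h : gg v x (tau v i) = 0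
  · rw [ee, if_pos h, zero_mul]
    have hmu := gg_eq_zero h
    have := (hx01 i).1
    linarith [hle.trans_eq hmu]
  · rw [ee, if_neg h, div_mul_cancel₀ _ h]

lemma ee_bounds (i : Fin d) (hle : x i ≤ mu v x (tau v i)) :
    0 ≤ ee v x i ∧ ee v x i ≤ 1 := by
  by_cases h : gg v x (tau v i) = 0
  · rw [ee, if_pos h]; norm_num
  · have hpos : 0 < gg v x (tau v i) := lt_of_le_of_ne (gg_nonneg hx01 _) (Ne.symm h)
    rw [ee, if_neg h]
    constructor
    · exact div_nonneg (hx01 i).1 hpos.le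
    · rw [div_le_one hpos]
      exact le_min hle (hx01 i).2

end core

section assembly
variable {d : ℕ} (v x : Fin d → ℝ)

noncomputable def yy (r : ℕ) (i : Fin d) : ℝ :=
  if i ∈ Sig v then
    (if tau v i ≤ r then cc v x (tau v i - 1) else if tau v i = r + 1 then 0 else 1)
  else (if tau v i ≤ r then ee v x i else 0)

variable {v x}

lemma tau_pos {i : Fin d} (hi : i ∈ Sig v) : 1 ≤ tau v i := by
  have : i ∈ (Sig v).filter (fun j => j ≤ i) := Finset.mem_filter.2 ⟨hi, le_rfl⟩
  exact Finset.card_pos.2 ⟨i, this⟩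

lemma sum_Sig (F : Fin d → ℝ) :
    ∑ j ∈ Sig v, F j = ∑ n ∈ Finset.range (Sig v).card,
      (if h : n < (Sig v).card then F (semb v ⟨n, h⟩) else 0) := by
  have h1 : Sig v = Finset.univ.image (semb v) := by
    ext j
    simp only [Finset.mem_image, Finset.mem_univ, true_and]
    exact ⟨fun hj => semb_surj v hj, fun ⟨r, hr⟩ => hr ▸ semb_mem v r⟩
  conv_lhs => rw [h1, Finset.sum_image (fun a _ b _ h => (semb v).injective h)]
  rw [← Fin.sum_univ_eq_sum_range
    (fun n => if h : n < (Sig v).card then F (semb v ⟨n, h⟩) else 0) (Sig v).card]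
  apply Finset.sum_congr rfl
  intro a _
  simp [a.isLt]

/-- Translation of the coSig constraints. -/
lemma x_le_mu (hxco : ∀ i : Fin d, i ∉ Sig v → x i + ∑ j ∈ SigGt v i, x j ≤ ((SigGt v i).card : ℝ)) (i : Fin d) (hi : i ∉ Sig v) : x i ≤ mu v x (tau v i) := by
  have h1 := hxco i hi
  have h2 : ∑ j ∈ SigGt v i, x j
      = ∑ n ∈ Finset.Ico (tau v i) (Sig v).card, XV v x n := sum_SigGt v x i
  have h3 : mu v x (tau v i)
      = ((SigGt v i).card : ℝ) - ∑ n ∈ Finset.Ico (tau v i) (Sig v).card, XV v x n := by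
    rw [mu, Finset.sum_sub_distrib, Finset.sum_const, Nat.card_Ico, card_SigGt, nsmul_eq_mul,
      mul_one, Nat.cast_sub (tau_le v i)]
  rw [h3, ← h2]
  linarith

/-- Translation of the Sig constraint. -/
lemma one_le_mu_zero (hxs : ∑ j ∈ Sig v, x j ≤ ((Sig v).card : ℝ) - 1) : 1 ≤ mu v x 0 := by
  have h2 : ∑ j ∈ Sig v, x j = ∑ n ∈ Finset.range (Sig v).card, XV v x n := sum_Sig x
  have h3 : mu v x 0 = ((Sig v).card : ℝ) - ∑ n ∈ Finset.range (Sig v).card, XV v x n := by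
    rw [mu, ← Finset.range_eq_Ico, Finset.sum_sub_distrib, Finset.sum_const, Finset.card_range,
      nsmul_eq_mul, mul_one]
  rw [h3, ← h2]
  linarith

lemma gg_zero_eq_one (hxs : ∑ j ∈ Sig v, x j ≤ ((Sig v).card : ℝ) - 1) : gg v x 0 = 1 :=
  min_eq_right (one_le_mu_zero hxs)

lemma yy_mem (hv : v ∈ ZeroOne d) (hx01 : ∀ i, 0 ≤ x i ∧ x i ≤ 1)
    (hxco : ∀ i : Fin d, i ∉ Sig v → x i + ∑ j ∈ SigGt v i, x j ≤ ((SigGt v i).card : ℝ))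
    {r : ℕ} (hr : r < (Sig v).card) :
    yy v x r ∈ convexHull ℝ (Xset v) := by
  classical
  set t : Fin d → Set ℝ := fun i =>
    if tau v i ≤ r then ({0, 1} : Set ℝ)
    else (if i ∈ Sig v ∧ r + 1 < tau v i then {1} else {0}) with ht
  have hsub : Set.univ.pi t ⊆ Xset v := by
    intro z hz
    have hz' : ∀ i, z i ∈ t i := fun i => hz i (Set.mem_univ i)
    constructor
    · intro i
      have := hz' i
      simp only [ht] at this
      split_ifs at this with h1 h2
      · rcases this with h | h <;> simp_all
      · right; simpa using this
      · left; simpa using this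
    · refine ⟨semb v ⟨r, hr⟩, ?_, ?_⟩
      · have htm : tau v (semb v ⟨r, hr⟩) = r + 1 := by
          rw [tau_semb]
        have hm := hz' (semb v ⟨r, hr⟩)
        simp only [ht, htm] at hm
        simp only [Nat.succ_le_iff, lt_irrefl, if_false, lt_self_iff_false, and_false,
          if_false] at hm
        have hz0 : z (semb v ⟨r, hr⟩) = 0 := by
          simpa using hm
        have hv1 : v (semb v ⟨r, hr⟩) = 1 := mem_Sig.1 (semb_mem v _)
        rw [hz0, hv1]; norm_num
      · intro i hmi
        have hit : ¬ (tau v i ≤ r) := by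
          rw [← L1' v ⟨r, hr⟩ i, not_lt]
          exact le_of_lt hmi
        have hm := hz' i
        simp only [ht] at hm
        rw [if_neg hit] at hm
        by_cases hiS : i ∈ Sig v
        · obtain ⟨r', rfl⟩ := semb_surj v hiS
          have hr' : (⟨r, hr⟩ : Fin (Sig v).card) < r' := (semb v).lt_iff_lt.1 hmi
          have : r + 1 < tau v (semb v r') := by
            rw [tau_semb]
            have : r < (r' : ℕ) := hr'
            omega
          rw [if_pos ⟨hiS, this⟩] at hm
          rw [Set.mem_singleton_iff.1 hm, mem_Sig.1 hiS]
        · have : ¬ (i ∈ Sig v ∧ r + 1 < tau v i) := fun h => hiS h.1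
          rw [if_neg this] at hm
          rw [Set.mem_singleton_iff.1 hm]
          rcases hv i with h | h
          · rw [h]
          · exact absurd (mem_Sig.2 h) hiS
  refine convexHull_mono hsub ?_
  apply mem_convexHull_pi
  intro i _
  simp only [ht]
  by_cases h1 : tau v i ≤ r
  · rw [if_pos h1]
    have hIcc : convexHull ℝ ({0, 1} : Set ℝ) = Set.Icc (0 : ℝ) 1 := by
      rw [convexHull_pair, segment_eq_Icc (by norm_num : (0:ℝ) ≤ 1)]
    rw [hIcc]
    by_cases hiS : i ∈ Sig v
    · have hlt : tau v i - 1 < (Sig v).card := by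
        have := tau_le v i; have := tau_pos hiS; omega
      have hb := cc_bounds (v := v) (x := x) hx01 (tau v i - 1) hlt
      rw [yy, if_pos hiS, if_pos h1]
      exact ⟨hb.1, hb.2⟩
    · have hb := ee_bounds hx01 i (x_le_mu hxco i hiS)
      rw [yy, if_neg hiS, if_pos h1]
      exact ⟨hb.1, hb.2⟩
  · rw [if_neg h1]
    by_cases hiS : i ∈ Sig v
    · by_cases h2 : tau v i = r + 1
      · have : ¬ (i ∈ Sig v ∧ r + 1 < tau v i) := by omega
        rw [if_neg this, convexHull_singleton, yy, if_pos hiS, if_neg h1, if_pos h2]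
        rfl
      · have h3 : r + 1 < tau v i := by omega
        rw [if_pos ⟨hiS, h3⟩, convexHull_singleton, yy, if_pos hiS, if_neg h1, if_neg h2]
        rfl
    · have : ¬ (i ∈ Sig v ∧ r + 1 < tau v i) := fun h => hiS h.1
      rw [if_neg this, convexHull_singleton, yy, if_neg hiS, if_neg h1]
      rfl

lemma yy_sum (hx01 : ∀ i, 0 ≤ x i ∧ x i ≤ 1)
    (hxco : ∀ i : Fin d, i ∉ Sig v → x i + ∑ j ∈ SigGt v i, x j ≤ ((SigGt v i).card : ℝ))
    (hxs : ∑ j ∈ Sig v, x j ≤ ((Sig v).card : ℝ) - 1) (i : Fin d) :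
    ∑ r ∈ Finset.range (Sig v).card, lam v x r * yy v x r i = x i := by
  classical
  set k := (Sig v).card with hk
  by_cases hiS : i ∈ Sig v
  · obtain ⟨j, rfl⟩ := semb_surj v hiS
    set J := (j : ℕ) with hJ
    have htj : tau v (semb v j) = J + 1 := tau_semb v j
    have hJk : J < k := j.isLt
    have hval : ∀ r : ℕ, yy v x r (semb v j)
        = if J + 1 ≤ r then cc v x J else if J = r then 0 else 1 := by
      intro r
      rw [yy, if_pos hiS, htj]
      simp only [Nat.add_sub_cancel]
      by_cases h1 : J + 1 ≤ r
      · rw [if_pos h1, if_pos h1]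
      · rw [if_neg h1, if_neg h1]
        by_cases h2 : J = r
        · rw [if_pos (by omega : J + 1 = r + 1), if_pos h2]
        · rw [if_neg (by omega : ¬ (J + 1 = r + 1)), if_neg h2]
    rw [Finset.range_eq_Ico, ← Finset.sum_Ico_consecutive _ (Nat.zero_le J) (le_of_lt hJk),
      Finset.sum_eq_sum_Ico_succ_bot hJk]
    have e1 : ∑ r ∈ Finset.Ico 0 J, lam v x r * yy v x r (semb v j)
        = ∑ r ∈ Finset.Ico 0 J, lam v x r := by
      apply Finset.sum_congr rfl
      intro r hr
      obtain ⟨_, hr2⟩ := Finset.mem_Ico.1 hr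
      rw [hval r, if_neg (by omega), if_neg (by omega), mul_one]
    have e2 : lam v x J * yy v x J (semb v j) = 0 := by
      rw [hval J, if_neg (by omega), if_pos rfl, mul_zero]
    have e3 : ∑ r ∈ Finset.Ico (J + 1) k, lam v x r * yy v x r (semb v j)
        = (∑ r ∈ Finset.Ico (J + 1) k, lam v x r) * cc v x J := by
      rw [Finset.sum_mul]
      apply Finset.sum_congr rfl
      intro r hr
      obtain ⟨hr1, _⟩ := Finset.mem_Ico.1 hr
      rw [hval r, if_pos hr1]
    rw [e1, e2, e3, TEL (0 : ℕ) J (Nat.zero_le J), TEL (J + 1) k hJk,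
      gg_zero_eq_one hxs, gg_top]
    have hXV : XV v x J = x (semb v j) := by
      rw [XV, dif_pos hJk]
    have := cc_identity hx01 J hJk
    rw [hXV] at this
    linarith
  · have hval : ∀ r : ℕ, yy v x r i = if tau v i ≤ r then ee v x i else 0 := by
      intro r
      rw [yy, if_neg hiS]
    have htk : tau v i ≤ k := tau_le v i
    rw [Finset.range_eq_Ico, ← Finset.sum_Ico_consecutive _ (Nat.zero_le (tau v i)) htk]
    have e1 : ∑ r ∈ Finset.Ico 0 (tau v i), lam v x r * yy v x r i = 0 := by
      apply Finset.sum_eq_zero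
      intro r hr
      obtain ⟨_, hr2⟩ := Finset.mem_Ico.1 hr
      rw [hval r, if_neg (by omega), mul_zero]
    have e2 : ∑ r ∈ Finset.Ico (tau v i) k, lam v x r * yy v x r i
        = (∑ r ∈ Finset.Ico (tau v i) k, lam v x r) * ee v x i := by
      rw [Finset.sum_mul]
      apply Finset.sum_congr rfl
      intro r hr
      obtain ⟨hr1, _⟩ := Finset.mem_Ico.1 hr
      rw [hval r, if_pos hr1]
    rw [e1, e2, TEL (tau v i) k htk, gg_top, zero_add, sub_zero]
    rw [mul_comm]
    exact ee_identity hx01 i (x_le_mu hxco i hiS)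

end assembly

lemma Qset_subset {d : ℕ} (v : Fin d → ℝ) (hv : v ∈ ZeroOne d) (hv0 : v ≠ 0) :
    Qset v ⊆ convexHull ℝ (Xset v) := by
  intro x hx
  obtain ⟨hx01, hxco, hxs⟩ := hx
  have hk : 0 < (Sig v).card := by
    rcases Function.ne_iff.1 hv0 with ⟨i, hi⟩
    apply Finset.card_pos.2
    refine ⟨i, mem_Sig.2 ?_⟩
    rcases hv i with h | h
    · exact absurd h hi
    · exact h
  have hsum1 : ∑ r ∈ Finset.range (Sig v).card, lam v x r = 1 := by
    rw [Finset.range_eq_Ico, TEL 0 (Sig v).card (Nat.zero_le _), gg_zero_eq_one hxs,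
      gg_top, sub_zero]
  have hxe : x = ∑ r ∈ Finset.range (Sig v).card, lam v x r • yy v x r := by
    funext i
    rw [Finset.sum_apply]
    have := yy_sum hx01 hxco hxs i
    simp only [Pi.smul_apply, smul_eq_mul]
    rw [← this]
  rw [hxe]
  exact (convex_convexHull ℝ (Xset v)).sum_mem
    (fun r _ => lam_nonneg hx01 r) hsum1
    (fun r hr => yy_mem hv hx01 hxco (Finset.mem_range.1 hr))

/-- linear description of the revlex-initial 0/1-polytope `P(v)`. -/
theorem stmt1 (d : ℕ) (hd : 0 < d) (v : Fin d → ℝ) (hv : v ∈ ZeroOne d) (hv0 : v ≠ 0) :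
    Pset v = {x : Fin d → ℝ |
      (∀ i, 0 ≤ x i ∧ x i ≤ 1) ∧
      (∀ i : Fin d, i ∉ Sig v → x i + ∑ j ∈ SigGt v i, x j ≤ ((SigGt v i).card : ℝ)) ∧
      (∑ j ∈ Sig v, x j ≤ ((Sig v).card : ℝ) - 1)} := by
  apply Set.Subset.antisymm
  · exact convexHull_min (Xset_subset_Qset v hv) (Qset_convex v)
  · exact Qset_subset v hv hv0
end

section
/- For every positive integer d and every v ∈ {0,1}^d with v ≠ 0, the dimension of the affine hull of the revlex-initial 0/1-polytope P(v) equals 1 + max({i ∈ {0,…,d−1} : e_i ≺_rlex v} ∪ {−1}), where e_i is the i-th standard unit vector; equivalently, with n = Σ_i 2^i v_i (which is the number of vertices of P(v)), the dimension of P(v) equals min{j ∈ ℕ : n ≤ 2^j}. -/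
open Finset

lemma geom2 (m : ℕ) : ∑ i ∈ Finset.range m, 2 ^ i = 2 ^ m - 1 := by
  induction m with
  | zero => simp
  | succ k ih =>
    rw [Finset.sum_range_succ, ih]
    have h1 : 1 ≤ 2 ^ k := Nat.one_le_two_pow
    have h2 : 2 ^ (k + 1) = 2 * 2 ^ k := by rw [pow_succ]; ring
    omega

lemma key_lt (dd : ℕ) (c e : ℕ → ℕ) (hc : ∀ i, c i ≤ 1) (he : ∀ i, e i ≤ 1)
    (m : ℕ) (hm : m < dd) (h1 : c m < e m) (h2 : ∀ i, m < i → c i = e i) :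
    ∑ i ∈ range dd, c i * 2 ^ i < ∑ i ∈ range dd, e i * 2 ^ i := by
  have hcm : c m = 0 := by have := he m; omega
  have hem : e m = 1 := by have := he m; omega
  have hsplit : ∀ f : ℕ → ℕ, ∑ i ∈ range dd, f i * 2 ^ i =
      ∑ i ∈ range (m+1), f i * 2 ^ i + ∑ i ∈ Ico (m+1) dd, f i * 2 ^ i := by
    intro f
    rw [Finset.range_eq_Ico, Finset.range_eq_Ico]
    exact (Finset.sum_Ico_consecutive (fun i => f i * 2 ^ i) (Nat.zero_le (m+1)) (show m+1 ≤ dd by omega)).symm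
  rw [hsplit c, hsplit e]
  have heq : ∑ i ∈ Ico (m+1) dd, c i * 2 ^ i = ∑ i ∈ Ico (m+1) dd, e i * 2 ^ i := by
    refine Finset.sum_congr rfl fun i hi => ?_
    rw [Finset.mem_Ico] at hi
    rw [h2 i (by omega)]
  rw [heq]
  have hlo : ∑ i ∈ range m, c i * 2 ^ i ≤ 2 ^ m - 1 := by
    calc ∑ i ∈ range m, c i * 2 ^ i ≤ ∑ i ∈ range m, 2 ^ i := by
          refine Finset.sum_le_sum fun i _ => ?_
          have := hc i; nlinarith [Nat.one_le_two_pow (n := i)]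
      _ = 2 ^ m - 1 := geom2 m
  have h1m : 1 ≤ 2 ^ m := Nat.one_le_two_pow
  have hle : ∑ i ∈ range (m+1), c i * 2 ^ i < ∑ i ∈ range (m+1), e i * 2 ^ i := by
    rw [Finset.sum_range_succ, Finset.sum_range_succ, hcm, hem]
    have : ∑ i ∈ range m, e i * 2 ^ i ≥ 0 := Nat.zero_le _
    omega
  omega

noncomputable def valN {d : ℕ} (x : Fin d → ℝ) : ℕ := ∑ i ∈ Sig x, 2 ^ (i : ℕ)

/-- binary digit sequence of a real vector -/
noncomputable def bN {d : ℕ} (x : Fin d → ℝ) : ℕ → ℕ := fun i =>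
  if h : i < d then (if x ⟨i, h⟩ = 1 then 1 else 0) else 0


lemma bN_le_one {d : ℕ} (x : Fin d → ℝ) (i : ℕ) : bN x i ≤ 1 := by
  unfold bN; split <;> [skip; omega]; split <;> omega

lemma valN_eq {d : ℕ} (x : Fin d → ℝ) : valN x = ∑ i ∈ range d, bN x i * 2 ^ i := by
  rw [valN, Sig, Finset.sum_filter, ← Fin.sum_univ_eq_sum_range (fun i => bN x i * 2 ^ i) d]
  refine Finset.sum_congr rfl fun i _ => ?_
  unfold bN
  rw [dif_pos i.isLt]
  have : (⟨(i : ℕ), i.isLt⟩ : Fin d) = i := Fin.ext rfl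
  rw [this]
  split <;> simp

lemma val_of_rlex {d : ℕ} {x y : Fin d → ℝ} (hx : x ∈ ZeroOne d) (hy : y ∈ ZeroOne d)
    (h : RlexLt x y) : valN x < valN y := by
  obtain ⟨m, hm1, hm2⟩ := h
  have hxm : x m = 0 := by
    rcases hx m with h0 | h1
    · exact h0
    · rcases hy m with g0 | g1 <;> rw [h1] at hm1 <;> [linarith [g0 ▸ hm1]; linarith [g1 ▸ hm1]]
  have hym : y m = 1 := by
    rcases hy m with g0 | g1
    · exfalso; rcases hx m with h0 | h1 <;> [linarith [hxm ▸ hm1, g0 ▸ hm1]; linarith]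
    · exact g1
  rw [valN_eq, valN_eq]
  refine key_lt d (bN x) (bN y) (bN_le_one x) (bN_le_one y) (m : ℕ) m.isLt ?_ ?_
  · unfold bN
    rw [dif_pos m.isLt, dif_pos m.isLt]
    have hmm : (⟨(m : ℕ), m.isLt⟩ : Fin d) = m := Fin.ext rfl
    rw [hmm, hxm, hym]
    norm_num
  · intro i hi
    unfold bN
    by_cases h : i < d
    · rw [dif_pos h, dif_pos h, hm2 ⟨i, h⟩ (by exact hi)]
    · rw [dif_neg h, dif_neg h]

lemma rlex_trichotomy {d : ℕ} {x y : Fin d → ℝ} (hx : x ∈ ZeroOne d) (hy : y ∈ ZeroOne d)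
    (hne : x ≠ y) : RlexLt x y ∨ RlexLt y x := by
  classical
  set s : Finset (Fin d) := Finset.univ.filter (fun i => x i ≠ y i) with hs
  have hsne : s.Nonempty := by
    by_contra h
    apply hne
    funext i
    by_contra hne2
    exact h ⟨i, by simp [hs, hne2]⟩
  set m := s.max' hsne with hmdef
  have hmem : m ∈ s := s.max'_mem hsne
  have hmne : x m ≠ y m := by simpa [hs] using hmem
  have habove : ∀ i : Fin d, m < i → x i = y i := by
    intro i hi
    by_contra hne2
    have : i ∈ s := by simp [hs, hne2]
    have := s.le_max' i this
    exact absurd (lt_of_lt_of_le hi this) (lt_irrefl _)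
  rcases hx m with h0 | h1 <;> rcases hy m with g0 | g1
  · exact absurd (h0.trans g0.symm) hmne
  · exact Or.inl ⟨m, by rw [h0, g1]; norm_num, habove⟩
  · exact Or.inr ⟨m, by rw [h1, g0]; norm_num, fun i hi => (habove i hi).symm⟩
  · exact absurd (h1.trans g1.symm) hmne

lemma rlex_iff_val {d : ℕ} {x y : Fin d → ℝ} (hx : x ∈ ZeroOne d) (hy : y ∈ ZeroOne d) :
    RlexLt x y ↔ valN x < valN y := by
  constructor
  · exact val_of_rlex hx hy
  · intro h
    by_cases hne : x = y
    · subst hne; omega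
    · rcases rlex_trichotomy hx hy hne with h1 | h1
      · exact h1
      · have := val_of_rlex hy hx h1; omega

lemma zero_mem_ZeroOne {d : ℕ} : (0 : Fin d → ℝ) ∈ ZeroOne d := fun i => Or.inl rfl

lemma valN_zero {d : ℕ} : valN (0 : Fin d → ℝ) = 0 := by
  rw [valN]
  convert Finset.sum_empty
  rw [Sig]
  refine Finset.filter_false_of_mem fun i _ => ?_
  simp

lemma single_mem_ZeroOne {d : ℕ} (i : Fin d) : Pi.single i (1 : ℝ) ∈ ZeroOne d := by
  intro k
  rcases eq_or_ne k i with h | h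
  · subst h; right; simp
  · left; simp [Pi.single_apply, h]

lemma Sig_single {d : ℕ} (i : Fin d) : Sig (Pi.single i (1 : ℝ)) = {i} := by
  rw [Sig]
  ext k
  simp only [Finset.mem_filter, Finset.mem_univ, true_and, Finset.mem_singleton,
    Pi.single_apply]
  constructor
  · intro h; by_contra hne; simp [hne] at h
  · intro h; simp [h]

lemma valN_single {d : ℕ} (i : Fin d) : valN (Pi.single i (1 : ℝ)) = 2 ^ (i : ℕ) := by
  rw [valN, Sig_single, Finset.sum_singleton]

lemma valN_lt {d : ℕ} (x : Fin d → ℝ) : valN x < 2 ^ d := by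
  have h1 : valN x ≤ ∑ i : Fin d, 2 ^ (i : ℕ) := Finset.sum_le_sum_of_subset (Finset.subset_univ _)
  rw [Fin.sum_univ_eq_sum_range (fun i => 2 ^ i) d, geom2] at h1
  have : 1 ≤ 2 ^ d := Nat.one_le_two_pow
  omega

lemma two_pow_le_valN {d : ℕ} {x : Fin d → ℝ} {i : Fin d} (h : x i = 1) :
    2 ^ (i : ℕ) ≤ valN x := by
  refine Finset.single_le_sum (f := fun j : Fin d => 2 ^ (j : ℕ)) (fun j _ => Nat.zero_le _) ?_
  rw [Sig]; simp [h]

lemma main_dim {d : ℕ} (v : Fin d → ℝ) (hv : v ∈ ZeroOne d) (hv0 : v ≠ 0) :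
    adim (Pset v) = sInf {j : ℕ | valN v ≤ 2 ^ j} := by
  classical
  set n := valN v with hn
  set S : Set ℕ := {j : ℕ | n ≤ 2 ^ j} with hS
  set j := sInf S with hj
  have hdS : d ∈ S := le_of_lt (valN_lt v)
  have hSne : S.Nonempty := ⟨d, hdS⟩
  have hnj : n ≤ 2 ^ j := Nat.sInf_mem hSne
  have hjd : j ≤ d := Nat.sInf_le hdS
  have hlt : ∀ k, k < j → 2 ^ k < n := by
    intro k hk
    have := Nat.notMem_of_lt_sInf (s := S) (hj ▸ hk)
    simpa [hS] using Nat.lt_of_not_le (by simpa [hS] using this)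
  have hn1 : 1 ≤ n := by
    obtain ⟨i, hi⟩ : ∃ i, v i ≠ 0 := by
      by_contra h
      push_neg at h
      exact hv0 (funext fun i => h i)
    have hvi : v i = 1 := (hv i).resolve_left hi
    have := two_pow_le_valN hvi
    have h1 : 1 ≤ 2 ^ (i : ℕ) := Nat.one_le_two_pow
    omega
  -- 0 ∈ Xset v
  have h0X : (0 : Fin d → ℝ) ∈ Xset v := by
    refine ⟨zero_mem_ZeroOne, (rlex_iff_val zero_mem_ZeroOne hv).mpr ?_⟩
    rw [valN_zero]; omega
  -- adim = finrank of linear span of Xset v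
  have hdim : adim (Pset v) = Module.finrank ℝ (Submodule.span ℝ (Xset v)) := by
    rw [adim, Pset, affineSpan_convexHull, direction_affineSpan,
      vectorSpan_eq_span_vsub_set_right ℝ h0X]
    have himg : (fun x => x -ᵥ (0 : Fin d → ℝ)) '' Xset v = Xset v := by
      simp [vsub_eq_sub]
    rw [himg]
  -- the independent family
  set g : Fin j → (Fin d → ℝ) := fun k => Pi.single (Fin.castLE hjd k) 1 with hg
  have hgind : LinearIndependent ℝ g := by
    have h1 := (Pi.basisFun ℝ (Fin d)).linearIndependent
    have h2 := h1.comp (Fin.castLE hjd) (Fin.castLE_injective hjd)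
    convert h2 using 1
    funext k
    rw [hg]
    simp [Pi.basisFun_apply]
  -- span equality
  have hspan : Submodule.span ℝ (Set.range g) = Submodule.span ℝ (Xset v) := by
    apply le_antisymm
    · rw [Submodule.span_le]
      rintro _ ⟨k, rfl⟩
      apply Submodule.subset_span
      refine ⟨single_mem_ZeroOne _, (rlex_iff_val (single_mem_ZeroOne _) hv).mpr ?_⟩
      rw [valN_single]
      exact hlt _ (by simpa using k.isLt)
    · rw [Submodule.span_le]
      intro x hx
      obtain ⟨hx01, hxr⟩ := hx
      have hxval : valN x < 2 ^ j := lt_of_lt_of_le ((rlex_iff_val hx01 hv).mp hxr) hnj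
      have hzero : ∀ i : Fin d, j ≤ (i : ℕ) → x i = 0 := by
        intro i hi
        rcases hx01 i with h0 | h1
        · exact h0
        · exfalso
          have := two_pow_le_valN h1
          have : 2 ^ j ≤ 2 ^ (i : ℕ) := Nat.pow_le_pow_right (by norm_num) hi
          omega
      have hrep : x = ∑ i : Fin d, Pi.single i (x i) := (Finset.univ_sum_single x).symm
      rw [hrep]
      apply Submodule.sum_mem
      intro i _
      by_cases hij : (i : ℕ) < j
      · have hgk : g ⟨(i : ℕ), hij⟩ = Pi.single i (1 : ℝ) := by
          simp only [hg]
          congr 1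
        have : Pi.single i (x i) = x i • g ⟨(i : ℕ), hij⟩ := by
          rw [hgk, ← Pi.single_smul, smul_eq_mul, mul_one]
        rw [this]
        exact Submodule.smul_mem _ _ (Submodule.subset_span ⟨_, rfl⟩)
      · rw [hzero i (by omega), Pi.single_zero]
        exact Submodule.zero_mem _
  rw [hdim, ← hspan, finrank_span_eq_card hgind, Fintype.card_fin]


/-- the dimension of `P(v)` equals `1 + max({i : e_i ≺_rlex v} ∪ {−1})`;
equivalently, with `n = Σ_i 2^i v_i`, it equals `min {j : n ≤ 2^j}`. -/
theorem stmt2 (d : ℕ) (hd : 0 < d) (v : Fin d → ℝ) (hv : v ∈ ZeroOne d) (hv0 : v ≠ 0) :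
    ((adim (Pset v) : ℤ) = 1 +
      (insert (-1 : ℤ)
        ((@Finset.filter (Fin d) (fun i => RlexLt (Pi.single i (1 : ℝ)) v)
            (Classical.decPred _) Finset.univ).image
          (fun i : Fin d => ((i : ℕ) : ℤ)))).max' (Finset.insert_nonempty _ _))
    ∧ adim (Pset v) = sInf {j : ℕ | (∑ i ∈ Sig v, 2 ^ (i : ℕ)) ≤ 2 ^ j} := by
  have hmain : adim (Pset v) = sInf {j : ℕ | valN v ≤ 2 ^ j} := main_dim v hv hv0
  refine ⟨?_, hmain⟩
  set n := valN v with hn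
  set S : Set ℕ := {j : ℕ | n ≤ 2 ^ j} with hS
  set j := sInf S with hj
  have hdS : d ∈ S := le_of_lt (valN_lt v)
  have hSne : S.Nonempty := ⟨d, hdS⟩
  have hnj : n ≤ 2 ^ j := Nat.sInf_mem hSne
  have hjd : j ≤ d := Nat.sInf_le hdS
  have hlt : ∀ k, k < j → 2 ^ k < n := by
    intro k hk
    have := Nat.notMem_of_lt_sInf (s := S) (hj ▸ hk)
    exact Nat.lt_of_not_le (by simpa [hS] using this)
  set F := (@Finset.filter (Fin d) (fun i => RlexLt (Pi.single i (1 : ℝ)) v)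
      (Classical.decPred fun i => RlexLt (Pi.single i (1 : ℝ)) v) Finset.univ) with hF
  have hFmem : ∀ i : Fin d, i ∈ F ↔ (i : ℕ) < j := by
    intro i
    rw [hF, @Finset.mem_filter _ _ (Classical.decPred _)]
    simp only [Finset.mem_univ, true_and]
    rw [rlex_iff_val (single_mem_ZeroOne i) hv, valN_single]
    constructor
    · intro h
      by_contra hc
      push_neg at hc
      have : 2 ^ j ≤ 2 ^ (i : ℕ) := Nat.pow_le_pow_right (by norm_num) hc
      omega
    · exact hlt _
  rw [hmain]
  rcases Nat.eq_zero_or_pos j with hj0 | hjpos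
  · have hFe : F = ∅ := by
      rw [Finset.eq_empty_iff_forall_notMem]
      intro i hi
      rw [hFmem i, hj0] at hi
      omega
    rw [hFe]
    simp [hj0]
  · obtain ⟨k, hk⟩ : ∃ k, j = k + 1 := ⟨j - 1, by omega⟩
    have hkd : k < d := by omega
    have hmax : (insert (-1 : ℤ) (F.image (fun i : Fin d => ((i : ℕ) : ℤ)))).max'
        (Finset.insert_nonempty _ _) = (k : ℤ) := by
      apply le_antisymm
      · apply Finset.max'_le
        intro y hy
        rcases Finset.mem_insert.mp hy with h | h
        · subst h; exact le_trans (by norm_num) (Int.ofNat_nonneg k)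
        · obtain ⟨i, hi, rfl⟩ := Finset.mem_image.mp h
          have := (hFmem i).mp hi
          exact_mod_cast by omega
      · apply Finset.le_max'
        apply Finset.mem_insert_of_mem
        apply Finset.mem_image.mpr
        exact ⟨⟨k, hkd⟩, (hFmem _).mpr (by simp [hk]), rfl⟩
    rw [hmax, hk]
    push_cast
    ring
end

section
/- For every positive integer d and every v ∈ {0,1}^d with e_{d−1} ≺_rlex v (so that P(v) is full-dimensional in ℝ^d), and for every i ∈ {0,…,d−1}, the inequality x_i ≥ 0 defines a facet of P(v). -/
open Finset

/-- for full-dimensional `P(v)` and every coordinate `i`,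
the inequality `x_i ≥ 0` defines a facet of `P(v)`. -/
theorem stmt3 (d : ℕ) (hd : 0 < d) (v : Fin d → ℝ) (hv : v ∈ ZeroOne d)
    (hfull : RlexLt (Pi.single (⟨d - 1, by omega⟩ : Fin d) (1 : ℝ)) v)
    (i : Fin d) :
    (∀ x ∈ Pset v, 0 ≤ x i) ∧
    adim {x ∈ Pset v | x i = 0} = adim (Pset v) - 1 := by
  have hlast : d - 1 < d := by omega
  set last : Fin d := ⟨d - 1, hlast⟩ with hlastdef
  have hfull' : RlexLt (Pi.single last (1 : ℝ)) v := hfull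
  obtain ⟨m, hm1, hm2⟩ := hfull'
  have hmne : m ≠ last := by
    intro h; subst h
    rw [Pi.single_eq_same] at hm1
    rcases hv last with h0 | h1 <;> linarith
  have hmlt : m < last := by
    rw [Fin.lt_def]
    show m.val < d - 1
    have h2 : m.val ≠ d - 1 := fun h => hmne (Fin.ext h)
    have := m.isLt
    omega
  have hvlast : v last = 1 := by
    have := hm2 last hmlt
    rw [Pi.single_eq_same] at this
    exact this.symm
  have hnotgt : ∀ k : Fin d, ¬ last < k := by
    intro k hk
    have := k.isLt
    simp only [Fin.lt_def] at hk
    exact absurd hk (by show ¬ (d - 1 < k.val); omega)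
  have hX0 : (0 : Fin d → ℝ) ∈ Xset v := by
    refine ⟨fun k => Or.inl rfl, last, ?_, fun k hk => absurd hk (hnotgt k)⟩
    simp [hvlast]
  have hXs : ∀ j : Fin d, Pi.single j (1 : ℝ) ∈ Xset v := by
    intro j
    refine ⟨fun k => ?_, ?_⟩
    · rcases eq_or_ne k j with h | h
      · subst h; exact Or.inr (Pi.single_eq_same k 1)
      · exact Or.inl (Pi.single_eq_of_ne h 1)
    · rcases eq_or_ne j last with h | h
      · subst h; exact ⟨m, hm1, hm2⟩
      · refine ⟨last, ?_, fun k hk => absurd hk (hnotgt k)⟩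
        rw [Pi.single_eq_of_ne (Ne.symm h), hvlast]
        norm_num
  have hP : Xset v ⊆ Pset v := subset_convexHull ℝ _
  have part1 : ∀ x ∈ Pset v, 0 ≤ x i := by
    intro x hx
    have hconv : Convex ℝ {x : Fin d → ℝ | 0 ≤ x i} := by
      intro a ha b hb s t hs ht hst
      simp only [Set.mem_setOf_eq, Pi.add_apply, Pi.smul_apply, smul_eq_mul] at *
      exact add_nonneg (mul_nonneg hs ha) (mul_nonneg ht hb)
    refine convexHull_min (fun y hy => ?_) hconv hx
    rcases hy.1 i with h | h <;> simp [Set.mem_setOf_eq, h]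
  have hsum : ∀ x : Fin d → ℝ, x = ∑ j, x j • (Pi.single j 1 : Fin d → ℝ) := by
    intro x
    rw [← Finset.univ_sum_single x]
    refine Finset.sum_congr rfl fun j _ => ?_
    funext k
    rcases eq_or_ne k j with h | h
    · subst h; simp
    · simp [Pi.single_eq_of_ne h]
  have hspan_single : ∀ j : Fin d, Pi.single j (1 : ℝ) ∈ vectorSpan ℝ (Pset v) := by
    intro j
    have := vsub_mem_vectorSpan ℝ (hP (hXs j)) (hP hX0)
    simpa using this
  have htop : vectorSpan ℝ (Pset v) = ⊤ := by
    rw [eq_top_iff]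
    intro x _
    rw [hsum x]
    exact Submodule.sum_mem _ fun j _ => Submodule.smul_mem _ _ (hspan_single j)
  have hdim_top : adim (Pset v) = d := by
    unfold adim
    rw [direction_affineSpan, htop, finrank_top]
    simp [Module.finrank_pi]
  have hF0 : (0 : Fin d → ℝ) ∈ {x ∈ Pset v | x i = 0} := ⟨hP hX0, rfl⟩
  have hFs : ∀ j : Fin d, j ≠ i → Pi.single j (1 : ℝ) ∈ {x ∈ Pset v | x i = 0} :=
    fun j hj => ⟨hP (hXs j), Pi.single_eq_of_ne (Ne.symm hj) 1⟩
  have hFdim : vectorSpan ℝ {x ∈ Pset v | x i = 0} =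
      LinearMap.ker (LinearMap.proj i : (Fin d → ℝ) →ₗ[ℝ] ℝ) := by
    apply le_antisymm
    · rw [vectorSpan_def, Submodule.span_le]
      rintro z hz
      rw [Set.mem_vsub] at hz
      obtain ⟨a, ha, b, hb, rfl⟩ := hz
      simp only [SetLike.mem_coe, LinearMap.mem_ker, LinearMap.proj_apply]
      have : (a -ᵥ b) i = a i - b i := rfl
      rw [this, ha.2, hb.2, sub_zero]
    · intro x hx
      rw [LinearMap.mem_ker] at hx
      rw [hsum x]
      refine Submodule.sum_mem _ fun j _ => ?_
      rcases eq_or_ne j i with h | h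
      · subst h
        have : x j = 0 := hx
        simp [this]
      · refine Submodule.smul_mem _ _ ?_
        have := vsub_mem_vectorSpan ℝ (hFs j h) hF0
        simpa using this
  have hsurj : Function.Surjective (LinearMap.proj i : (Fin d → ℝ) →ₗ[ℝ] ℝ) :=
    fun r => ⟨Pi.single i r, by simp⟩
  have hker : Module.finrank ℝ
      (LinearMap.ker (LinearMap.proj i : (Fin d → ℝ) →ₗ[ℝ] ℝ)) = d - 1 := by
    have h1 := LinearMap.finrank_range_add_finrank_ker
      (LinearMap.proj i : (Fin d → ℝ) →ₗ[ℝ] ℝ)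
    rw [LinearMap.range_eq_top.mpr hsurj, finrank_top] at h1
    have h2 : Module.finrank ℝ ℝ = 1 := Module.finrank_self ℝ
    have h3 : Module.finrank ℝ (Fin d → ℝ) = d := by simp [Module.finrank_pi]
    omega
  refine ⟨part1, ?_⟩
  rw [hdim_top]
  unfold adim
  rw [direction_affineSpan, hFdim, hker]
end

section
/- Let d be a positive integer and v ∈ {0,1}^d with v ≠ 0, with weight w = s(v) and signature sig_1(v) > … > sig_w(v). Let 1 ≤ p < q ≤ w, and let x be a vertex of P(v) contained in the block X_q(v). Then for every z ∈ X_p(v) with z_i = x_i for all 0 ≤ i < sig_q(v), z_{sig_q(v)} = 0, and z_{sig_r(v)} = 1 for all r with p < r < q, the closed segment [x,z] is an edge (a 1-dimensional face) of P(v). -/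
open Finset

/-- The block `X_q(v)`: 0/1-points with `x_{sig_q(v)} = 0` agreeing with `v`
above `sig_q(v)`. -/
def Block {d : ℕ} (v : Fin d → ℝ) (sig : ℕ → Fin d) (q : ℕ) : Set (Fin d → ℝ) :=
  {x | x ∈ ZeroOne d ∧ x (sig q) = 0 ∧ ∀ i : Fin d, sig q < i → x i = v i}

/-- `max({i < b : x_i ≠ v_i} ∪ {−1})` as an integer. -/
noncomputable def maxDiff {d : ℕ} (v x : Fin d → ℝ) (b : ℕ) : ℤ :=
  (insert (-1 : ℤ)
    ((@Finset.filter (Fin d) (fun i => (i : ℕ) < b ∧ x i ≠ v i)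
        (Classical.decPred _) Finset.univ).image
      (fun i : Fin d => ((i : ℕ) : ℤ)))).max' (Finset.insert_nonempty _ _)

/-- if `x` is a vertex of `P(v)` in block `X_q(v)`, `1 ≤ p < q ≤ s(v)`,
and `z ∈ X_p(v)` agrees with `x` below `sig_q(v)`, has `z_{sig_q(v)} = 0` and
`z_{sig_r(v)} = 1` for `p < r < q`, then `[x,z]` is an edge of `P(v)`. -/
theorem stmt9 (d : ℕ) (hd : 0 < d) (v : Fin d → ℝ) (hv : v ∈ ZeroOne d) (hv0 : v ≠ 0)
    (w : ℕ) (hw : w = (Sig v).card)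
    (sig : ℕ → Fin d)
    (hanti : StrictAntiOn sig (Set.Icc 1 w))
    (himg : ∀ j : Fin d, j ∈ Sig v ↔ ∃ q, 1 ≤ q ∧ q ≤ w ∧ sig q = j)
    (p q : ℕ) (hp : 1 ≤ p) (hpq : p < q) (hq : q ≤ w)
    (x : Fin d → ℝ) (hx : x ∈ Block v sig q)
    (z : Fin d → ℝ) (hzB : z ∈ Block v sig p)
    (hz1 : ∀ i : Fin d, (i : ℕ) < (sig q : ℕ) → z i = x i)
    (hz2 : z (sig q) = 0)
    (hz3 : ∀ r : ℕ, p < r → r < q → z (sig r) = 1) :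
    IsFaceOf (Pset v) (segment ℝ x z) ∧ adim (segment ℝ x z) = 1 := by

  classical
  obtain ⟨hx01, hxa, hxgt⟩ := hx
  obtain ⟨hz01, hzb, hzgt⟩ := hzB
  have hpw : p ≤ w := le_of_lt (lt_of_lt_of_le hpq hq)
  have hqmem : q ∈ Set.Icc 1 w := ⟨le_trans hp hpq.le, hq⟩
  have hpmem : p ∈ Set.Icc 1 w := ⟨hp, hpw⟩
  set a : Fin d := sig q with ha
  set b : Fin d := sig p with hbdef
  have hab : a < b := hanti hpmem hqmem hpq
  have hva : v a = 1 := by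
    have : a ∈ Sig v := (himg a).mpr ⟨q, hqmem.1, hq, rfl⟩
    simpa [Sig] using this
  have hvb : v b = 1 := by
    have : b ∈ Sig v := (himg b).mpr ⟨p, hp, hpw, rfl⟩
    simpa [Sig] using this
  have hmid : ∀ i : Fin d, a < i → i < b → v i = 1 → z i = 1 := by
    intro i hai hib hvi
    obtain ⟨r, hr1, hrw, hri⟩ := (himg i).mp (by simpa [Sig] using hvi)
    have hrmem : r ∈ Set.Icc 1 w := ⟨hr1, hrw⟩
    have hpr : p < r := by
      by_contra h
      push_neg at h
      rcases h.lt_or_eq with h | h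
      · exact absurd hib (lt_asymm (hri ▸ hanti hrmem hpmem h))
      · rw [h] at hri; rw [← hbdef] at hri; rw [hri] at hib; exact lt_irrefl _ hib
    have hrq : r < q := by
      by_contra h
      push_neg at h
      rcases h.lt_or_eq with h | h
      · exact absurd hai (lt_asymm (hri ▸ hanti hqmem hrmem h))
      · rw [← h] at hri; rw [← ha] at hri; rw [hri] at hai; exact lt_irrefl _ hai
    rw [← hri]; exact hz3 r hpr hrq
  set S : Finset (Fin d) := Finset.univ.filter (fun i => a < i ∧ v i = 0 ∧ z i = 1) with hS
  have hbS : b ∉ S := by simp [hS, hvb]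
  have haS : a ∉ S := by simp [hS]
  have hxS : ∀ i ∈ S, x i = 0 := by
    intro i hi
    rw [hS, Finset.mem_filter] at hi
    rw [hxgt i hi.2.1, hi.2.2.1]
  have hzS : ∀ i ∈ S, z i = 1 := by
    intro i hi
    rw [hS, Finset.mem_filter] at hi
    exact hi.2.2.2
  set B : ℝ := (d : ℝ) + 1 with hBdef
  have hB : (0:ℝ) < B := by positivity
  set c : Fin d → ℝ := fun i =>
    if i = b then (S.card : ℝ) else if i ∈ S then 1 else if x i = 1 then B else -B with hc
  set f : (Fin d → ℝ) → ℝ := fun y => ∑ i, c i * y i with hf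
  have hlin : IsLinearMap ℝ f := by
    constructor
    · intro u u'
      simp only [hf, Pi.add_apply, mul_add, Finset.sum_add_distrib]
    · intro r u
      simp only [hf, Pi.smul_apply, smul_eq_mul, Finset.mul_sum]
      exact Finset.sum_congr rfl fun i _ => by ring
  set R : Finset (Fin d) := Finset.univ \ insert b S with hR
  have hmemR : ∀ i : Fin d, i ≠ b → i ∉ S → i ∈ R := by
    intro i h1 h2
    rw [hR, Finset.mem_sdiff, Finset.mem_insert]
    exact ⟨Finset.mem_univ _, by tauto⟩
  have hRmem : ∀ i ∈ R, i ≠ b ∧ i ∉ S := by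
    intro i hi
    rw [hR, Finset.mem_sdiff, Finset.mem_insert] at hi
    push_neg at hi
    exact hi.2
  have hsplit : ∀ y : Fin d → ℝ,
      f y = (∑ i ∈ R, c i * y i) + ((S.card : ℝ) * y b + ∑ i ∈ S, y i) := by
    intro y
    have h1 : ∑ i ∈ R, c i * y i + ∑ i ∈ insert b S, c i * y i = ∑ i, c i * y i :=
      Finset.sum_sdiff (Finset.subset_univ _)
    have h2 : ∑ i ∈ insert b S, c i * y i = c b * y b + ∑ i ∈ S, c i * y i :=
      Finset.sum_insert hbS
    have h3 : c b = (S.card : ℝ) := by rw [hc]; simp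
    have h4 : ∑ i ∈ S, c i * y i = ∑ i ∈ S, y i := by
      refine Finset.sum_congr rfl fun i hi => ?_
      have hib : i ≠ b := fun h => hbS (h ▸ hi)
      rw [hc]; simp [hib, hi]
    simp only [hf]
    rw [← h1, h2, h3, h4]
  have hcR : ∀ i ∈ R, c i = if x i = 1 then B else -B := by
    intro i hi
    obtain ⟨h1, h2⟩ := hRmem i hi
    rw [hc]; simp [h1, h2]
  have hterm : ∀ y : Fin d → ℝ, y ∈ ZeroOne d → ∀ i ∈ R, c i * y i ≤ c i * x i := by
    intro y hy i hi
    rcases hx01 i with hxi | hxi <;> rcases hy i with hyi | hyi <;>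
      simp [hcR i hi, hxi, hyi] <;> linarith
  have hterm' : ∀ y : Fin d → ℝ, y ∈ ZeroOne d → ∀ i ∈ R, y i ≠ x i →
      c i * y i ≤ c i * x i - B := by
    intro y hy i hi hne
    rcases hx01 i with hxi | hxi <;> rcases hy i with hyi | hyi <;>
      first
      | (exact absurd (hyi.trans hxi.symm) hne)
      | (simp [hcR i hi, hxi, hyi] <;> linarith)
  have hsumS_le : ∀ y : Fin d → ℝ, y ∈ ZeroOne d → ∑ i ∈ S, y i ≤ (S.card : ℝ) := by
    intro y hy
    calc ∑ i ∈ S, y i ≤ ∑ i ∈ S, (1:ℝ) :=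
          Finset.sum_le_sum fun i _ => by rcases hy i with h | h <;> rw [h] <;> norm_num
      _ = (S.card : ℝ) := by simp
  have hxb1 : x b = 1 := by rw [hxgt b hab, hvb]
  have hMx : f x = (∑ i ∈ R, c i * x i) + (S.card : ℝ) := by
    rw [hsplit x, hxb1, Finset.sum_eq_zero hxS]; ring
  have hxz : ∀ i : Fin d, i ≠ b → i ∉ S → z i = x i := by
    intro i hib hiS
    rcases lt_trichotomy i a with h | h | h
    · exact hz1 i h
    · rw [h, hz2, hxa]
    · rcases lt_trichotomy i b with h2 | h2 | h2
      · rcases hv i with hv0 | hv1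
        · rcases hz01 i with hz0 | hz1'
          · rw [hz0, hxgt i h, hv0]
          · exact absurd (by rw [hS]; simp [h, hv0, hz1'] : i ∈ S) hiS
        · rw [hmid i h h2 hv1, hxgt i h, hv1]
      · exact absurd h2 hib
      · rw [hzgt i h2, hxgt i h]
  have hfz : f z = f x := by
    rw [hsplit z, hMx, hzb]
    have h1 : ∑ i ∈ R, c i * z i = ∑ i ∈ R, c i * x i := by
      refine Finset.sum_congr rfl fun i hi => ?_
      obtain ⟨h1, h2⟩ := hRmem i hi
      rw [hxz i h1 h2]
    have h2 : ∑ i ∈ S, z i = (S.card : ℝ) := by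
      rw [Finset.sum_congr rfl hzS]; simp
    rw [h1, h2]; ring
  have xmem : x ∈ Xset v := by
    refine ⟨hx01, a, ?_, hxgt⟩
    rw [hxa, hva]; norm_num
  have zmem : z ∈ Xset v := by
    refine ⟨hz01, b, ?_, hzgt⟩
    rw [hzb, hvb]; norm_num
  have main : ∀ y ∈ Xset v, f y ≤ f x ∧ (f y = f x → y = x ∨ y = z) := by
    rintro y ⟨hy01, hylex⟩
    by_cases hyR : ∀ i ∈ R, y i = x i
    · have hsy : f y = (∑ i ∈ R, c i * x i) + ((S.card : ℝ) * y b + ∑ i ∈ S, y i) := by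
        rw [hsplit y]
        congr 1
        exact Finset.sum_congr rfl fun i hi => by rw [hyR i hi]
      rcases hy01 b with hyb | hyb
      · have hble : f y ≤ f x := by
          rw [hsy, hMx, hyb]
          have := hsumS_le y hy01
          have hc0 : (0:ℝ) ≤ (S.card : ℝ) := Nat.cast_nonneg _
          linarith
        refine ⟨hble, fun he => ?_⟩
        rw [hsy, hMx, hyb] at he
        have hsum : ∑ i ∈ S, y i = (S.card : ℝ) := by linarith
        have hall : ∀ i ∈ S, y i = 1 := by
          have h0 : ∑ i ∈ S, ((1:ℝ) - y i) = 0 := by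
            rw [Finset.sum_sub_distrib, hsum]; simp
          have h1 := (Finset.sum_eq_zero_iff_of_nonneg
            (fun i _ => by rcases hy01 i with h | h <;> rw [h] <;> norm_num)).mp h0
          intro i hi
          have := h1 i hi
          linarith
        right
        funext i
        by_cases hib : i = b
        · rw [hib, hyb, hzb]
        · by_cases hiS : i ∈ S
          · rw [hall i hiS, hzS i hiS]
          · rw [hyR i (hmemR i hib hiS), ← hxz i hib hiS]
      · obtain ⟨m, hm1, hm2⟩ := hylex
        have hma : ¬ a < m := by
          intro ham
          have hvm : v m = 1 := by
            rcases hv m with h | h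
            · rcases hy01 m with h' | h' <;> rw [h', h] at hm1 <;> linarith
            · exact h
          have hym : y m = 0 := by
            rcases hy01 m with h | h
            · exact h
            · rw [h, hvm] at hm1; linarith
          by_cases hmb : m = b
          · rw [hmb, hyb] at hym; norm_num at hym
          · by_cases hmS : m ∈ S
            · rw [hS, Finset.mem_filter] at hmS
              rw [hmS.2.2.1] at hvm; norm_num at hvm
            · have := hyR m (hmemR m hmb hmS)
              rw [hym, hxgt m ham, hvm] at this; norm_num at this
        have hS0 : ∀ i ∈ S, y i = 0 := by
          intro i hi
          have hai : a < i := by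
            rw [hS, Finset.mem_filter] at hi; exact hi.2.1
          have hvi : v i = 0 := by
            rw [hS, Finset.mem_filter] at hi; exact hi.2.2.1
          rw [hm2 i (lt_of_le_of_lt (not_lt.mp hma) hai), hvi]
        have hfy : f y = f x := by
          rw [hsy, hMx, hyb, Finset.sum_eq_zero hS0]; ring
        refine ⟨le_of_eq hfy, fun _ => Or.inl ?_⟩
        funext i
        by_cases hib : i = b
        · rw [hib, hyb, hxb1]
        · by_cases hiS : i ∈ S
          · rw [hS0 i hiS, hxS i hiS]
          · exact hyR i (hmemR i hib hiS)
    · push_neg at hyR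
      obtain ⟨i0, hi0R, hi0ne⟩ := hyR
      have hsum : ∑ i ∈ R, c i * y i ≤ (∑ i ∈ R, c i * x i) - B := by
        have h1 : ∑ i ∈ R \ {i0}, c i * y i ≤ ∑ i ∈ R \ {i0}, c i * x i :=
          Finset.sum_le_sum fun i hi =>
            hterm y hy01 i (Finset.mem_of_subset (Finset.sdiff_subset) hi)
        have h2 : c i0 * y i0 ≤ c i0 * x i0 - B := hterm' y hy01 i0 hi0R hi0ne
        have e1 : ∑ i ∈ R, c i * y i = ∑ i ∈ R \ {i0}, c i * y i + c i0 * y i0 := by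
          rw [Finset.sum_eq_sum_sdiff_singleton_add hi0R]
        have e2 : ∑ i ∈ R, c i * x i = ∑ i ∈ R \ {i0}, c i * x i + c i0 * x i0 := by
          rw [Finset.sum_eq_sum_sdiff_singleton_add hi0R]
        rw [e1, e2]; linarith
      have hcard : (S.card : ℝ) ≤ (d : ℝ) := by
        have : S.card ≤ d := by
          simpa [Fintype.card_fin] using Finset.card_le_univ S
        exact_mod_cast this
      have hyble : (S.card : ℝ) * y b ≤ (S.card : ℝ) := by
        have hc0 : (0:ℝ) ≤ (S.card : ℝ) := Nat.cast_nonneg _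
        rcases hy01 b with h | h <;> rw [h] <;> nlinarith
      have hlt : f y < f x := by
        rw [hsplit y, hMx]
        have := hsumS_le y hy01
        have : ∑ i ∈ S, y i ≤ (S.card : ℝ) := this
        rw [hBdef] at hsum
        linarith
      exact ⟨hlt.le, fun he => absurd he (ne_of_lt hlt)⟩
  -- the linear functional as a bundled map
  set F : (Fin d → ℝ) →ₗ[ℝ] ℝ := IsLinearMap.mk' f hlin with hF
  have hFapp : ∀ y, F y = f y := fun y => rfl
  have hFle : ∀ y ∈ Pset v, f y ≤ f x := by
    intro y hy
    have hsub : Pset v ⊆ {y | f y ≤ f x} :=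
      convexHull_min (fun y' hy' => (main y' hy').1) (convex_halfSpace_le hlin (f x))
    exact hsub hy
  have xP : x ∈ Pset v := subset_convexHull ℝ _ xmem
  have zP : z ∈ Pset v := subset_convexHull ℝ _ zmem
  have hseg_sub : segment ℝ x z ⊆ Pset v :=
    (convex_convexHull ℝ _).segment_subset xP zP
  have hEq : {y | y ∈ Pset v ∧ f y = f x} = segment ℝ x z := by
    apply Set.Subset.antisymm
    · rintro y ⟨hyP, hyf⟩
      rw [Pset, _root_.convexHull_eq] at hyP
      obtain ⟨ι, t, wt, pf, hw0, hw1, hmem, hcm⟩ := hyP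
      have hy_eq : y = ∑ i ∈ t, wt i • pf i := by
        rw [← hcm, Finset.centerMass_eq_of_sum_1 _ _ hw1]
      have hfs : f y = ∑ i ∈ t, wt i * f (pf i) := by
        rw [hy_eq, ← hFapp, map_sum]
        exact Finset.sum_congr rfl fun i _ => by rw [map_smul]; simp [hFapp]
      have key : ∀ i ∈ t, wt i ≠ 0 → pf i ∈ ({x, z} : Set (Fin d → ℝ)) := by
        intro i hi hwi
        have hle : ∀ j ∈ t, f (pf j) ≤ f x := fun j hj => (main _ (hmem j hj)).1
        have heqi : f (pf i) = f x := by
          by_contra hne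
          have hlt : f (pf i) < f x := lt_of_le_of_ne (hle i hi) hne
          have hwipos : 0 < wt i := lt_of_le_of_ne (hw0 i hi) (Ne.symm hwi)
          have hstrict : ∑ j ∈ t, wt j * f (pf j) < ∑ j ∈ t, wt j * f x := by
            refine Finset.sum_lt_sum (fun j hj => ?_) ⟨i, hi, ?_⟩
            · exact mul_le_mul_of_nonneg_left (hle j hj) (hw0 j hj)
            · exact (mul_lt_mul_iff_right₀ hwipos).mpr hlt
          rw [← hfs, ← Finset.sum_mul, hw1, one_mul] at hstrict
          exact absurd hyf (ne_of_lt hstrict)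
        rcases (main _ (hmem i hi)).2 heqi with h | h <;> simp [h]
      have hycm : y ∈ convexHull ℝ ({x, z} : Set (Fin d → ℝ)) := by
        rw [← hcm, ← Finset.centerMass_filter_ne_zero]
        apply Finset.centerMass_mem_convexHull
        · intro i hi
          exact hw0 i (Finset.mem_of_subset (Finset.filter_subset _ _) hi)
        · rw [Finset.sum_filter_ne_zero, hw1]; norm_num
        · intro i hi
          rw [Finset.mem_filter] at hi
          exact key i hi.1 hi.2
      rwa [convexHull_pair] at hycm
    · intro y hy
      refine ⟨hseg_sub hy, ?_⟩
      obtain ⟨α, β, hα, hβ, hαβ, rfl⟩ := hy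
      have : f (α • x + β • z) = α * f x + β * f z := by
        rw [hlin.map_add, hlin.map_smul, hlin.map_smul]; simp
      rw [this, hfz, ← add_mul, hαβ, one_mul]
  have hexp : IsExposed ℝ (Pset v) (segment ℝ x z) := by
    intro _
    refine ⟨LinearMap.toContinuousLinearMap F, ?_⟩
    rw [← hEq]
    ext y
    simp only [Set.mem_setOf_eq, LinearMap.coe_toContinuousLinearMap', hFapp]
    constructor
    · rintro ⟨hyP, hyf⟩
      exact ⟨hyP, fun y' hy' => by rw [hyf]; exact hFle y' hy'⟩
    · rintro ⟨hyP, hmax⟩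
      exact ⟨hyP, le_antisymm (hFle y hyP) (hmax x xP)⟩
  have hext : IsExtreme ℝ (Pset v) (segment ℝ x z) := hexp.isExtreme
  refine ⟨⟨convex_segment x z, hext⟩, ?_⟩
  have hxz_ne : x ≠ z := by
    intro h
    have : x b = z b := congrFun h b
    rw [hxb1, hzb] at this
    norm_num at this
  have hspan : affineSpan ℝ (segment ℝ x z) = affineSpan ℝ ({x, z} : Set (Fin d → ℝ)) := by
    apply le_antisymm
    · rw [affineSpan_le, ← convexHull_pair]
      exact convexHull_subset_affineSpan _
    · apply affineSpan_mono
      intro y hy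
      rcases hy with h | h
      · rw [h]; exact left_mem_segment ℝ x z
      · rw [Set.mem_singleton_iff.mp h]; exact right_mem_segment ℝ x z
  rw [adim, hspan, direction_affineSpan, vectorSpan_pair]
  have : x -ᵥ z ≠ 0 := by
    rw [vsub_eq_sub, sub_ne_zero]
    exact hxz_ne
  exact finrank_span_singleton this
end

section
/- Let d be a positive integer and v ∈ {0,1}^d with v ≠ 0, with weight w = s(v) and signature sig_1(v) > … > sig_w(v). Let 1 ≤ p < q ≤ w, and let x be a vertex of P(v) contained in the block X_q(v) such that max({i ∈ {0,…,sig_q(v)−1} : x_i ≠ v_i} ∪ {−1}) ∉ Sig(v). Then for every z ∈ X_p(v) with z_i = x_i for all 0 ≤ i < sig_q(v), z_{sig_q(v)} = 1, and z_{sig_r(v)} = 1 for all r with p < r < q, the closed segment [x,z] is an edge (a 1-dimensional face) of P(v). -/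
open Finset

-- helper lemmas
lemma term_sign (ci ui wi : ℝ) (hu : ui = 0 ∨ ui = 1)
    (h : (ci ≤ -1 ∧ wi = 0) ∨ (1 ≤ ci ∧ wi = 1)) :
    0 ≤ ci * (wi - ui) ∧ (ci * (wi - ui) = 0 → wi = ui) := by
  rcases hu with hu | hu <;> rcases h with ⟨h1, h2⟩ | ⟨h1, h2⟩ <;> subst hu <;> subst h2 <;>
    constructor <;> intros <;> nlinarith

lemma sum_pow_le (d k : ℕ) :
    ∑ i ∈ Finset.univ.filter (fun i : Fin d => (i : ℕ) < k), (2:ℝ) ^ (i : ℕ) ≤ 2 ^ k - 1 := by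
  have h1 : ∑ i ∈ Finset.univ.filter (fun i : Fin d => (i : ℕ) < k), (2:ℝ) ^ (i : ℕ)
      = ∑ j ∈ (Finset.univ.filter (fun i : Fin d => (i : ℕ) < k)).image (Fin.val), (2:ℝ) ^ j := by
    rw [Finset.sum_image]
    intro a _ b _ hab
    exact Fin.val_injective hab
  rw [h1]
  have h2 : (Finset.univ.filter (fun i : Fin d => (i : ℕ) < k)).image (Fin.val) ⊆ Finset.range k := by
    intro j hj
    simp only [Finset.mem_image, Finset.mem_filter] at hj
    obtain ⟨i, ⟨_, hi⟩, rfl⟩ := hj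
    exact Finset.mem_range.mpr hi
  calc ∑ j ∈ (Finset.univ.filter (fun i : Fin d => (i : ℕ) < k)).image (Fin.val), (2:ℝ) ^ j
      ≤ ∑ j ∈ Finset.range k, (2:ℝ) ^ j :=
        Finset.sum_le_sum_of_subset_of_nonneg h2 (fun j _ _ => by positivity)
    _ = ((2:ℝ) ^ k - 1) / (2 - 1) := geom_sum_eq (by norm_num) k
    _ = 2 ^ k - 1 := by norm_num

set_option maxHeartbeats 4000000 in
/-- if `x` is a vertex of `P(v)` in block `X_q(v)` with
`max({i < sig_q(v) : x_i ≠ v_i} ∪ {−1}) ∉ Sig(v)`, `1 ≤ p < q ≤ s(v)`,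
and `z ∈ X_p(v)` agrees with `x` below `sig_q(v)`, has `z_{sig_q(v)} = 1` and
`z_{sig_r(v)} = 1` for `p < r < q`, then `[x,z]` is an edge of `P(v)`. -/
theorem stmt10 (d : ℕ) (hd : 0 < d) (v : Fin d → ℝ) (hv : v ∈ ZeroOne d) (hv0 : v ≠ 0)
    (w : ℕ) (hw : w = (Sig v).card)
    (sig : ℕ → Fin d)
    (hanti : StrictAntiOn sig (Set.Icc 1 w))
    (himg : ∀ j : Fin d, j ∈ Sig v ↔ ∃ q, 1 ≤ q ∧ q ≤ w ∧ sig q = j)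
    (p q : ℕ) (hp : 1 ≤ p) (hpq : p < q) (hq : q ≤ w)
    (x : Fin d → ℝ) (hx : x ∈ Block v sig q)
    (hmax : ¬ ∃ i ∈ Sig v, ((i : ℕ) : ℤ) = maxDiff v x (sig q : ℕ))
    (z : Fin d → ℝ) (hzB : z ∈ Block v sig p)
    (hz1 : ∀ i : Fin d, (i : ℕ) < (sig q : ℕ) → z i = x i)
    (hz2 : z (sig q) = 1)
    (hz3 : ∀ r : ℕ, p < r → r < q → z (sig r) = 1) :
    IsFaceOf (Pset v) (segment ℝ x z) ∧ adim (segment ℝ x z) = 1 := by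
  classical
  -- basic facts
  have hq1 : 1 ≤ q := le_trans hp hpq.le
  have hpw : p ≤ w := le_trans hpq.le hq
  have hpmem : p ∈ Set.Icc 1 w := ⟨hp, hpw⟩
  have hqmem : q ∈ Set.Icc 1 w := ⟨hq1, hq⟩
  have hba : (sig q : ℕ) < (sig p : ℕ) := hanti hpmem hqmem hpq
  have hvb : v (sig q) = 1 := by
    have : sig q ∈ Sig v := (himg _).mpr ⟨q, hq1, hq, rfl⟩
    simpa [Sig] using this
  have hva : v (sig p) = 1 := by
    have : sig p ∈ Sig v := (himg _).mpr ⟨p, hp, hpw, rfl⟩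
    simpa [Sig] using this
  have hx01 : ∀ i, x i = 0 ∨ x i = 1 := hx.1
  have hz01 : ∀ i, z i = 0 ∨ z i = 1 := hzB.1
  have hv01 : ∀ i, v i = 0 ∨ v i = 1 := hv
  have hxb : x (sig q) = 0 := hx.2.1
  have hza : z (sig p) = 0 := hzB.2.1
  have hxab : ∀ i : Fin d, (sig q : ℕ) < (i : ℕ) → x i = v i :=
    fun i hi => hx.2.2 i (Fin.lt_def.mpr hi)
  have hzaa : ∀ i : Fin d, (sig p : ℕ) < (i : ℕ) → z i = v i :=
    fun i hi => hzB.2.2 i (Fin.lt_def.mpr hi)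
  -- signature entries between sig q and sig p are 1 in z
  have hzsig : ∀ i : Fin d, v i = 1 → (sig q : ℕ) < (i : ℕ) → (i : ℕ) < (sig p : ℕ) → z i = 1 := by
    intro i hvi hbi hia
    have hmem : i ∈ Sig v := by simp [Sig, hvi]
    obtain ⟨r, hr1, hrw, hri⟩ := (himg i).mp hmem
    have hrmem : r ∈ Set.Icc 1 w := ⟨hr1, hrw⟩
    have hpr : p < r := by
      by_contra hle
      push_neg at hle
      rcases lt_or_eq_of_le hle with h | h
      · have := hanti hrmem hpmem h
        rw [hri] at this
        exact absurd (Fin.lt_def.mp this) (by omega)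
      · rw [h] at hri; rw [hri] at hia; omega
    have hrq : r < q := by
      by_contra hle
      push_neg at hle
      rcases lt_or_eq_of_le hle with h | h
      · have := hanti hqmem hrmem h
        rw [hri] at this
        exact absurd (Fin.lt_def.mp this) (by omega)
      · rw [← h] at hri; rw [hri] at hbi; omega
    rw [← hri]
    exact hz3 r hpr hrq
  -- z between: agreement of z with v above sig q at signature positions also via x; and x=v=1 there
  -- membership
  have hxX : x ∈ Xset v := by
    refine ⟨hx.1, sig q, ?_, fun i hi => hx.2.2 i hi⟩
    rw [hxb, hvb]; norm_num
  have hzX : z ∈ Xset v := by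
    refine ⟨hzB.1, sig p, ?_, fun i hi => hzB.2.2 i hi⟩
    rw [hza, hva]; norm_num
  have hxz : x ≠ z := by
    intro h
    rw [h] at hxb
    rw [hxb] at hz2
    norm_num at hz2
  -- the functional
  set N : Finset (Fin d) :=
    Finset.univ.filter (fun j : Fin d => (sig q : ℕ) < (j : ℕ) ∧ (j : ℕ) < (sig p : ℕ) ∧ ¬ v j = 1)
    with hN
  set t : ℝ := ∑ j ∈ N, z j with ht
  set c : Fin d → ℝ := fun i =>
    if (i : ℕ) < (sig q : ℕ) then 4 * x i - 1
    else if (i : ℕ) = (sig q : ℕ) then 2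
    else if (i : ℕ) < (sig p : ℕ) then (if v i = 1 then (d : ℝ) + 3 else 2 * z i - 1)
    else if (i : ℕ) = (sig p : ℕ) then 2 + t
    else (if v i = 1 then 1 else -1) * (((d : ℝ) + 3) * 2 ^ (i : ℕ))
    with hc
  have ht0 : 0 ≤ t := by
    apply Finset.sum_nonneg
    intro j _
    rcases hz01 j with h | h <;> rw [h] <;> norm_num
  have htd : t ≤ d := by
    have h1 : t ≤ ∑ _j ∈ N, (1:ℝ) := by
      apply Finset.sum_le_sum
      intro j _
      rcases hz01 j with h | h <;> rw [h] <;> norm_num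
    have h2 : ∑ _j ∈ N, (1:ℝ) = (N.card : ℝ) := by simp
    have h3 : N.card ≤ d := by
      calc N.card ≤ (Finset.univ : Finset (Fin d)).card := Finset.card_filter_le _ _
        _ = d := Finset.card_univ.trans (Fintype.card_fin d)
    calc t ≤ (N.card : ℝ) := by rw [← h2]; exact h1
      _ ≤ d := by exact_mod_cast h3
  -- branch lemmas for c
  have hclow : ∀ i : Fin d, (i : ℕ) < (sig q : ℕ) → c i = 4 * x i - 1 := by
    intro i h; simp only [hc]; rw [if_pos h]
  have hcb : c (sig q) = 2 := by
    simp [hc]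
  have hcmid : ∀ i : Fin d, (sig q : ℕ) < (i : ℕ) → (i : ℕ) < (sig p : ℕ) →
      c i = if v i = 1 then (d : ℝ) + 3 else 2 * z i - 1 := by
    intro i h1 h2; simp only [hc]
    rw [if_neg (by omega), if_neg (by omega), if_pos h2]
  have hca : c (sig p) = 2 + t := by
    have h1 : ¬ ((sig p : ℕ) < (sig q : ℕ)) := by omega
    have h2 : ¬ ((sig p : ℕ) = (sig q : ℕ)) := by omega
    simp only [hc]
    rw [if_neg h1, if_neg h2]
    simp
  have hchigh : ∀ i : Fin d, (sig p : ℕ) < (i : ℕ) →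
      c i = (if v i = 1 then 1 else -1) * (((d : ℝ) + 3) * 2 ^ (i : ℕ)) := by
    intro i h; simp only [hc]
    rw [if_neg (by omega), if_neg (by omega), if_neg (by omega), if_neg (by omega)]
  -- sign matching below sig p
  have hsgn : ∀ i : Fin d, (i : ℕ) < (sig p : ℕ) →
      (c i ≤ -1 ∧ z i = 0) ∨ (1 ≤ c i ∧ z i = 1) := by
    intro i hia
    rcases lt_trichotomy (i : ℕ) (sig q : ℕ) with h | h | h
    · have hci := hclow i h
      have hzi := hz1 i h
      rcases hx01 i with h0 | h0
      · left; rw [hci, hzi, h0]; norm_num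
      · right; rw [hci, hzi, h0]; norm_num
    · have hieq : i = sig q := Fin.val_injective h
      right
      rw [hieq, hcb, hz2]
      norm_num
    · by_cases hvi : v i = 1
      · right
        rw [hcmid i h hia, if_pos hvi, hzsig i hvi h hia]
        constructor
        · have : (0:ℝ) ≤ d := Nat.cast_nonneg d
          linarith
        · rfl
      · rcases hz01 i with h0 | h0
        · left; rw [hcmid i h hia, if_neg hvi, h0]; norm_num
        · right; rw [hcmid i h hia, if_neg hvi, h0]; norm_num
  have hsgnx : ∀ i : Fin d, (i : ℕ) < (sig q : ℕ) →
      (c i ≤ -1 ∧ x i = 0) ∨ (1 ≤ c i ∧ x i = 1) := by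
    intro i hi
    have := hsgn i (lt_trans hi hba)
    rw [hz1 i hi] at this
    exact this
  have hcabs : ∀ i : Fin d, |c i| ≤ ((d : ℝ) + 3) * 2 ^ (i : ℕ) := by
    intro i
    have h2i : (1:ℝ) ≤ 2 ^ (i : ℕ) := one_le_pow₀ (by norm_num)
    have hd0 : (0:ℝ) ≤ d := Nat.cast_nonneg d
    have hbig : (d : ℝ) + 3 ≤ ((d : ℝ) + 3) * 2 ^ (i : ℕ) := by nlinarith
    have hsmall : |c i| ≤ (d : ℝ) + 3 → |c i| ≤ ((d : ℝ) + 3) * 2 ^ (i : ℕ) :=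
      fun h => le_trans h hbig
    rcases lt_trichotomy (i : ℕ) (sig q : ℕ) with h | h | h
    · apply hsmall
      rw [hclow i h]
      rcases hx01 i with h0 | h0 <;> rw [h0] <;> rw [abs_le] <;> constructor <;> linarith
    · apply hsmall
      have hieq : i = sig q := Fin.val_injective h
      rw [hieq, hcb, abs_le]; constructor <;> linarith
    · rcases lt_trichotomy (i : ℕ) (sig p : ℕ) with h2 | h2 | h2
      · apply hsmall
        rw [hcmid i h h2]
        by_cases hvi : v i = 1
        · rw [if_pos hvi, abs_le]; constructor <;> linarith
        · rw [if_neg hvi]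
          rcases hz01 i with h0 | h0 <;> rw [h0] <;> rw [abs_le] <;> constructor <;> linarith
      · apply hsmall
        have hieq : i = sig p := Fin.val_injective h2
        rw [hieq, hca, abs_le]; constructor <;> linarith
      · rw [hchigh i h2]
        by_cases hvi : v i = 1
        · rw [if_pos hvi, one_mul, abs_of_nonneg (by positivity)]
        · rw [if_neg hvi, neg_one_mul, abs_neg, abs_of_nonneg (by positivity)]
  -- f z = f x
  have hfzx : ∑ i, c i * z i = ∑ i, c i * x i := by
    have key : ∀ i : Fin d, c i * z i - c i * x i =
        (if i = sig q then (2:ℝ) else 0) + (if i = sig p then -(2+t) else 0)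
          + (if i ∈ N then z i else 0) := by
      intro i
      rcases lt_trichotomy (i : ℕ) (sig q : ℕ) with h | h | h
      · have h1 : i ≠ sig q := fun e => by rw [e] at h; omega
        have h2 : i ≠ sig p := fun e => by rw [e] at h; omega
        have h3 : i ∉ N := by
          simp only [hN, Finset.mem_filter, Finset.mem_univ, true_and]
          push_neg
          intro hgt; omega
        rw [hz1 i h, if_neg h1, if_neg h2, if_neg h3]; ring
      · have hieq : i = sig q := Fin.val_injective h
        have h2 : i ≠ sig p := fun e => by rw [e] at h; omega
        have h3 : i ∉ N := by
          simp only [hN, Finset.mem_filter, Finset.mem_univ, true_and]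
          push_neg
          intro hgt; omega
        rw [if_pos hieq, if_neg h2, if_neg h3, hieq, hcb, hz2, hxb]; ring
      · have h1 : i ≠ sig q := fun e => by rw [e] at h; omega
        rcases lt_trichotomy (i : ℕ) (sig p : ℕ) with h2 | h2 | h2
        · have h2' : i ≠ sig p := fun e => by rw [e] at h2; omega
          have hxv := hxab i h
          by_cases hvi : v i = 1
          · have h3 : i ∉ N := by
              simp only [hN, Finset.mem_filter, Finset.mem_univ, true_and]
              push_neg
              intro _ _; exact hvi
            rw [if_neg h1, if_neg h2', if_neg h3, hzsig i hvi h h2, hxv, hvi]; ring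
          · have h3 : i ∈ N := by
              simp only [hN, Finset.mem_filter, Finset.mem_univ, true_and]
              exact ⟨h, h2, hvi⟩
            have hv0 : v i = 0 := (hv01 i).resolve_right hvi
            rw [if_neg h1, if_neg h2', if_pos h3, hcmid i h h2, if_neg hvi, hxv, hv0]
            rcases hz01 i with h0 | h0 <;> rw [h0] <;> ring
        · have hieq : i = sig p := Fin.val_injective h2
          have h3 : i ∉ N := by
            simp only [hN, Finset.mem_filter, Finset.mem_univ, true_and]
            push_neg
            intro _ hlt; omega
          have hxv := hxab i h
          rw [if_neg h1, if_pos hieq, if_neg h3, hieq, hca]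
          rw [hieq] at hxv
          rw [hxv, hva, hza]; ring
        · have h2' : i ≠ sig p := fun e => by rw [e] at h2; omega
          have h3 : i ∉ N := by
            simp only [hN, Finset.mem_filter, Finset.mem_univ, true_and]
            push_neg
            intro _ hlt; omega
          rw [if_neg h1, if_neg h2', if_neg h3, hxab i h, hzaa i h2]; ring
    have hsum : ∑ i, (c i * z i - c i * x i) = 0 := by
      rw [Finset.sum_congr rfl (fun i _ => key i)]
      rw [Finset.sum_add_distrib, Finset.sum_add_distrib]
      rw [Finset.sum_ite_eq' Finset.univ (sig q) (fun _ => (2:ℝ)),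
        Finset.sum_ite_eq' Finset.univ (sig p) (fun _ => -(2+t))]
      have : ∑ i, (if i ∈ N then z i else 0) = t := by
        rw [Finset.sum_ite_mem, Finset.univ_inter]
      rw [this]
      simp
    have := Finset.sum_sub_distrib (f := fun i => c i * z i) (g := fun i => c i * x i) (s := Finset.univ)
    rw [hsum] at this
    linarith [this.symm]
  -- main inequality
  have hmain : ∀ y ∈ Xset v, (∑ i, c i * y i ≤ ∑ i, c i * x i) ∧
      ((∑ i, c i * y i) = (∑ i, c i * x i) → y = x ∨ y = z) := by
    have hdR : (0:ℝ) ≤ d := Nat.cast_nonneg d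
    intro y hy
    obtain ⟨hy01, k, hylt, hyag⟩ := hy
    have hy01 : ∀ i, y i = 0 ∨ y i = 1 := hy01
    have hkey : y k = 0 ∧ v k = 1 := by
      rcases hy01 k with h | h <;> rcases hv01 k with g | g <;> rw [h, g] at hylt <;>
        first | exact ⟨h, g⟩ | norm_num at hylt
    obtain ⟨hyk0, hvk1⟩ := hkey
    have hyag' : ∀ i : Fin d, (k : ℕ) < (i : ℕ) → y i = v i :=
      fun i hi => hyag i (Fin.lt_def.mpr hi)
    have hsub : ∑ i, c i * (x i - y i) = ∑ i, c i * x i - ∑ i, c i * y i := by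
      rw [← Finset.sum_sub_distrib]
      exact Finset.sum_congr rfl (fun i _ => by ring)
    suffices hsuff : 0 ≤ ∑ i, c i * (x i - y i) ∧
        ((∑ i, c i * (x i - y i)) = 0 → y = x ∨ y = z) by
      constructor
      · have := hsuff.1; rw [hsub] at this; linarith
      · intro he
        exact hsuff.2 (by rw [hsub, he, sub_self])
    rcases lt_trichotomy (k : ℕ) (sig q : ℕ) with hkb | hkb | hkb
    · -- CASE E : k below sig q
      have hwit : ∃ i₀ : Fin d, (i₀ : ℕ) < (sig q : ℕ) ∧ x i₀ = 1 ∧ y i₀ = 0 := by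
        have hkS : k ∈ Sig v := by simp [Sig, hvk1]
        have hMk : ((k : ℕ) : ℤ) ≠ maxDiff v x (sig q : ℕ) :=
          fun e => hmax ⟨k, hkS, e⟩
        have hM2 : maxDiff v x (sig q : ℕ) = -1 ∨
            ∃ i : Fin d, ((i : ℕ) : ℤ) = maxDiff v x (sig q : ℕ) ∧
              (i : ℕ) < (sig q : ℕ) ∧ x i ≠ v i := by
          have h := Finset.max'_mem (insert (-1 : ℤ)
            ((@Finset.filter (Fin d) (fun i => (i : ℕ) < (sig q : ℕ) ∧ x i ≠ v i)
                (Classical.decPred _) Finset.univ).image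
              (fun i : Fin d => ((i : ℕ) : ℤ)))) (Finset.insert_nonempty _ _)
          rw [Finset.mem_insert] at h
          rcases h with h | h
          · left; exact h
          · right
            rw [Finset.mem_image] at h
            obtain ⟨i, hi, he⟩ := h
            simp only [Finset.mem_filter] at hi
            exact ⟨i, he, hi.2.1, hi.2.2⟩
        rcases lt_trichotomy ((k : ℕ) : ℤ) (maxDiff v x (sig q : ℕ)) with hkM | hkM | hkM
        · rcases hM2 with h | ⟨i₀, hi₀M, hi₀b, hi₀ne⟩
          · rw [h] at hkM; omega
          · have hvi₀ : v i₀ ≠ 1 := by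
              intro hvi
              exact hmax ⟨i₀, by simp [Sig, hvi], hi₀M⟩
            have hv0 : v i₀ = 0 := (hv01 i₀).resolve_right hvi₀
            have hx1 : x i₀ = 1 := by
              rcases hx01 i₀ with h | h
              · exact absurd (h.trans hv0.symm) hi₀ne
              · exact h
            have hki₀ : (k : ℕ) < (i₀ : ℕ) := by omega
            exact ⟨i₀, hi₀b, hx1, by rw [hyag' i₀ hki₀, hv0]⟩
        · exact absurd hkM hMk
        · -- maxDiff < k : x k = v k = 1 and y k = 0
          have hxk : x k = v k := by
            by_contra hne
            have hkf : k ∈ @Finset.filter (Fin d)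
                (fun i => (i : ℕ) < (sig q : ℕ) ∧ x i ≠ v i)
                (Classical.decPred _) Finset.univ := by
              simp only [Finset.mem_filter]
              exact ⟨Finset.mem_univ k, hkb, hne⟩
            have hmem : ((k : ℕ) : ℤ) ∈ (insert (-1 : ℤ)
              ((@Finset.filter (Fin d) (fun i => (i : ℕ) < (sig q : ℕ) ∧ x i ≠ v i)
                  (Classical.decPred _) Finset.univ).image
                (fun i : Fin d => ((i : ℕ) : ℤ)))) :=
              Finset.mem_insert_of_mem (Finset.mem_image.mpr ⟨k, hkf, rfl⟩)
            have hle : ((k : ℕ) : ℤ) ≤ maxDiff v x (sig q : ℕ) :=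
              Finset.le_max' _ _ hmem
            omega
          exact ⟨k, hkb, by rw [hxk, hvk1], hyk0⟩
      obtain ⟨i₀, hi₀b, hxi₀, hyi₀⟩ := hwit
      have hi₀q : i₀ ≠ sig q := fun e => by rw [e] at hi₀b; omega
      set L : Fin d → ℝ := fun i =>
        (if i = i₀ then (3:ℝ) else 0) + (if i = sig q then (-2:ℝ) else 0) with hLdef
      have hLb : ∀ i ∈ Finset.univ, L i ≤ c i * (x i - y i) := by
        intro i _
        by_cases hii : i = i₀
        · have hLi : L i = 3 := by
            rw [hii]; simp only [hLdef]
            rw [if_neg hi₀q]; norm_num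
          rw [hLi, hii, hclow i₀ hi₀b, hxi₀, hyi₀]
          norm_num
        · by_cases hiq : i = sig q
          · have hLi : L i = -2 := by
              rw [hiq]; simp only [hLdef]
              rw [if_neg (Ne.symm hi₀q)]; norm_num
            have hyb : y (sig q) = 1 := by rw [hyag' (sig q) hkb, hvb]
            rw [hLi, hiq, hcb, hxb, hyb]
            norm_num
          · have hLi : L i = 0 := by
              simp only [hLdef]
              rw [if_neg hii, if_neg hiq]; norm_num
            rw [hLi]
            rcases lt_trichotomy (i : ℕ) (sig q : ℕ) with h | h | h
            · exact (term_sign _ _ _ (hy01 i) (hsgnx i h)).1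
            · exact absurd (Fin.val_injective h) hiq
            · rw [hxab i h, hyag' i (by omega)]
              simp
      have hsumL : ∑ i, L i = 1 := by
        simp only [hLdef]
        rw [Finset.sum_add_distrib]
        rw [Finset.sum_ite_eq' Finset.univ i₀ (fun _ => (3:ℝ)),
          Finset.sum_ite_eq' Finset.univ (sig q) (fun _ => (-2:ℝ))]
        norm_num
      have hD : (1:ℝ) ≤ ∑ i, c i * (x i - y i) := by
        calc (1:ℝ) = ∑ i, L i := hsumL.symm
          _ ≤ _ := Finset.sum_le_sum hLb
      exact ⟨by linarith, fun h0 => absurd h0 (by linarith)⟩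
    · -- CASE k = sig q : y in the same block as x
      have hkeq : k = sig q := Fin.val_injective hkb
      rw [hkeq] at hyk0 hyag'
      have hge : ∀ i ∈ Finset.univ, 0 ≤ c i * (x i - y i) := by
        intro i _
        rcases lt_trichotomy (i : ℕ) (sig q : ℕ) with h | h | h
        · exact (term_sign _ _ _ (hy01 i) (hsgnx i h)).1
        · have hieq : i = sig q := Fin.val_injective h
          rw [hieq, hxb, hyk0]
          norm_num
        · rw [hxab i h, hyag' i h]
          simp
      refine ⟨Finset.sum_nonneg hge, fun h0 => Or.inl ?_⟩
      have hzero := (Finset.sum_eq_zero_iff_of_nonneg hge).mp h0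
      funext i
      rcases lt_trichotomy (i : ℕ) (sig q : ℕ) with h | h | h
      · exact ((term_sign _ _ _ (hy01 i) (hsgnx i h)).2 (hzero i (Finset.mem_univ i))).symm
      · have hieq : i = sig q := Fin.val_injective h
        rw [hieq, hyk0, hxb]
      · rw [hxab i h, hyag' i h]
    · rcases lt_trichotomy (k : ℕ) (sig p : ℕ) with hka | hka | hka
      · -- CASE D : sig q < k < sig p
        have hxk : x k = 1 := by rw [hxab k hkb, hvk1]
        have hck : c k = (d : ℝ) + 3 := by rw [hcmid k hkb hka, if_pos hvk1]
        have hkq : k ≠ sig q := fun e => by rw [e] at hkb; omega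
        set L : Fin d → ℝ := fun i =>
          (if i = k then (d : ℝ) + 3 else 0) + (if i = sig q then (-2:ℝ) else 0)
            + (if (sig q : ℕ) < (i : ℕ) ∧ (i : ℕ) < (k : ℕ) then (-1:ℝ) else 0) with hLdef
        have hLb : ∀ i ∈ Finset.univ, L i ≤ c i * (x i - y i) := by
          intro i _
          by_cases hik : i = k
          · have hLi : L i = (d : ℝ) + 3 := by
              rw [hik]; simp only [hLdef]
              rw [if_neg hkq,
                if_neg (by omega : ¬((sig q : ℕ) < (k : ℕ) ∧ (k : ℕ) < (k : ℕ)))]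
              norm_num
            rw [hLi, hik, hck, hxk, hyk0]
            nlinarith [hdR]
          · by_cases hiq : i = sig q
            · have hLi : L i = -2 := by
                rw [hiq]; simp only [hLdef]
                rw [if_neg (Ne.symm hkq),
                  if_neg (by omega : ¬((sig q : ℕ) < (sig q : ℕ) ∧ (sig q : ℕ) < (k : ℕ)))]
                norm_num
              rw [hLi, hiq, hcb, hxb]
              rcases hy01 (sig q) with h | h <;> rw [h] <;> norm_num
            · rcases lt_trichotomy (i : ℕ) (sig q : ℕ) with h | h | h
              · have hLi : L i = 0 := by
                  simp only [hLdef]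
                  rw [if_neg hik, if_neg hiq,
                    if_neg (by omega : ¬((sig q : ℕ) < (i : ℕ) ∧ (i : ℕ) < (k : ℕ)))]
                  norm_num
                rw [hLi]
                exact (term_sign _ _ _ (hy01 i) (hsgnx i h)).1
              · exact absurd (Fin.val_injective h) hiq
              · rcases lt_trichotomy (i : ℕ) (k : ℕ) with h2 | h2 | h2
                · have hLi : L i = -1 := by
                    simp only [hLdef]
                    rw [if_neg hik, if_neg hiq,
                      if_pos (⟨h, h2⟩ : (sig q : ℕ) < (i : ℕ) ∧ (i : ℕ) < (k : ℕ))]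
                    norm_num
                  rw [hLi]
                  have hia : (i : ℕ) < (sig p : ℕ) := by omega
                  rw [hxab i h]
                  by_cases hvi : v i = 1
                  · rw [hcmid i h hia, if_pos hvi, hvi]
                    rcases hy01 i with hyy | hyy <;> rw [hyy] <;> nlinarith [hdR]
                  · have hv0 : v i = 0 := (hv01 i).resolve_right hvi
                    rw [hcmid i h hia, if_neg hvi, hv0]
                    rcases hy01 i with hyy | hyy <;> rcases hz01 i with hzz | hzz <;>
                      rw [hyy, hzz] <;> norm_num
                · exact absurd (Fin.val_injective h2) hik
                · have hLi : L i = 0 := by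
                    simp only [hLdef]
                    rw [if_neg hik, if_neg hiq,
                      if_neg (by omega : ¬((sig q : ℕ) < (i : ℕ) ∧ (i : ℕ) < (k : ℕ)))]
                    norm_num
                  rw [hLi, hxab i (by omega), hyag' i h2]
                  simp
        have hsumL : (1:ℝ) ≤ ∑ i, L i := by
          simp only [hLdef]
          rw [Finset.sum_add_distrib, Finset.sum_add_distrib]
          rw [Finset.sum_ite_eq' Finset.univ k (fun _ => (d : ℝ) + 3),
            Finset.sum_ite_eq' Finset.univ (sig q) (fun _ => (-2:ℝ))]
          have h3 : ∑ i : Fin d,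
              (if (sig q : ℕ) < (i : ℕ) ∧ (i : ℕ) < (k : ℕ) then (-1:ℝ) else 0)
              = -((Finset.univ.filter
                  (fun i : Fin d => (sig q : ℕ) < (i : ℕ) ∧ (i : ℕ) < (k : ℕ))).card : ℝ) := by
            rw [← Finset.sum_filter, Finset.sum_const, nsmul_eq_mul]
            ring
          rw [h3]
          have hcard : ((Finset.univ.filter
              (fun i : Fin d => (sig q : ℕ) < (i : ℕ) ∧ (i : ℕ) < (k : ℕ))).card : ℝ) ≤ d := by
            have h4 : (Finset.univ.filter
                (fun i : Fin d => (sig q : ℕ) < (i : ℕ) ∧ (i : ℕ) < (k : ℕ))).card ≤ d := by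
              calc _ ≤ (Finset.univ : Finset (Fin d)).card := Finset.card_filter_le _ _
                _ = d := Finset.card_univ.trans (Fintype.card_fin d)
            exact_mod_cast h4
          simp only [Finset.mem_univ, if_pos]
          linarith
        have hD : (1:ℝ) ≤ ∑ i, c i * (x i - y i) :=
          le_trans hsumL (Finset.sum_le_sum hLb)
        exact ⟨by linarith, fun h0 => absurd h0 (by linarith)⟩
      · -- CASE k = sig p : y in the same block as z
        have hkeq : k = sig p := Fin.val_injective hka
        rw [hkeq] at hyk0 hyag'
        have hxzsum : ∑ i, c i * (x i - y i) = ∑ i, c i * (z i - y i) := by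
          have e2 : ∑ i, c i * (z i - y i) = ∑ i, c i * z i - ∑ i, c i * y i := by
            rw [← Finset.sum_sub_distrib]
            exact Finset.sum_congr rfl (fun i _ => by ring)
          rw [hsub, e2, hfzx]
        rw [hxzsum]
        have hge : ∀ i ∈ Finset.univ, 0 ≤ c i * (z i - y i) := by
          intro i _
          rcases lt_trichotomy (i : ℕ) (sig p : ℕ) with h | h | h
          · exact (term_sign _ _ _ (hy01 i) (hsgn i h)).1
          · have hieq : i = sig p := Fin.val_injective h
            rw [hieq, hza, hyk0]
            norm_num
          · rw [hzaa i h, hyag' i h]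
            simp
        refine ⟨Finset.sum_nonneg hge, fun h0 => Or.inr ?_⟩
        have hzero := (Finset.sum_eq_zero_iff_of_nonneg hge).mp h0
        funext i
        rcases lt_trichotomy (i : ℕ) (sig p : ℕ) with h | h | h
        · exact ((term_sign _ _ _ (hy01 i) (hsgn i h)).2 (hzero i (Finset.mem_univ i))).symm
        · have hieq : i = sig p := Fin.val_injective h
          rw [hieq, hyk0, hza]
        · rw [hzaa i h, hyag' i h]
      · -- CASE C : k above sig p
        have hdR : (0:ℝ) ≤ d := Nat.cast_nonneg d
        have hxk : x k = 1 := by rw [hxab k (by omega), hvk1]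
        have hck : c k = ((d : ℝ) + 3) * 2 ^ (k : ℕ) := by
          rw [hchigh k hka, if_pos hvk1, one_mul]
        set L : Fin d → ℝ := fun i =>
          (if i = k then ((d : ℝ) + 3) * 2 ^ (k : ℕ) else 0)
            + (if (i : ℕ) < (k : ℕ) then -(((d : ℝ) + 3) * 2 ^ (i : ℕ)) else 0) with hLdef
        have hLb : ∀ i ∈ Finset.univ, L i ≤ c i * (x i - y i) := by
          intro i _
          rcases lt_trichotomy (i : ℕ) (k : ℕ) with h | h | h
          · have hik : i ≠ k := fun e => by rw [e] at h; omega
            have hLi : L i = -(((d : ℝ) + 3) * 2 ^ (i : ℕ)) := by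
              simp only [hLdef]
              rw [if_neg hik, if_pos h]; norm_num
            rw [hLi]
            have h1 : |x i - y i| ≤ 1 := by
              rcases hx01 i with hxx | hxx <;> rcases hy01 i with hyy | hyy <;>
                rw [hxx, hyy] <;> norm_num
            have e1 : |c i * (x i - y i)| ≤ ((d : ℝ) + 3) * 2 ^ (i : ℕ) := by
              rw [abs_mul]
              calc |c i| * |x i - y i| ≤ (((d : ℝ) + 3) * 2 ^ (i : ℕ)) * 1 :=
                    mul_le_mul (hcabs i) h1 (abs_nonneg _) (by positivity)
                _ = ((d : ℝ) + 3) * 2 ^ (i : ℕ) := mul_one _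
            linarith [neg_abs_le (c i * (x i - y i)), e1]
          · have hieq : i = k := Fin.val_injective h
            have hLi : L i = ((d : ℝ) + 3) * 2 ^ (k : ℕ) := by
              rw [hieq]; simp only [hLdef]
              rw [if_neg (lt_irrefl (k : ℕ))]; norm_num
            rw [hLi, hieq, hck, hxk, hyk0]
            norm_num
          · have hik : i ≠ k := fun e => by rw [e] at h; omega
            have hLi : L i = 0 := by
              simp only [hLdef]
              rw [if_neg hik, if_neg (by omega : ¬((i : ℕ) < (k : ℕ)))]; norm_num
            rw [hLi, hxab i (by omega), hyag' i h]
            simp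
        have hsumL : (1:ℝ) ≤ ∑ i, L i := by
          simp only [hLdef]
          rw [Finset.sum_add_distrib]
          rw [Finset.sum_ite_eq' Finset.univ k (fun _ => ((d : ℝ) + 3) * 2 ^ (k : ℕ))]
          have h3 : ∑ i : Fin d, (if (i : ℕ) < (k : ℕ) then -(((d : ℝ) + 3) * 2 ^ (i : ℕ)) else 0)
              = -(((d : ℝ) + 3) * ∑ i ∈ Finset.univ.filter (fun i : Fin d => (i : ℕ) < (k : ℕ)),
                  (2:ℝ) ^ (i : ℕ)) := by
            rw [← Finset.sum_filter, Finset.mul_sum]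
            rw [← Finset.sum_neg_distrib]
          rw [h3]
          have hgeo := sum_pow_le d (k : ℕ)
          have h5 : ((d : ℝ) + 3) * (∑ i ∈ Finset.univ.filter
              (fun i : Fin d => (i : ℕ) < (k : ℕ)), (2:ℝ) ^ (i : ℕ))
              ≤ ((d : ℝ) + 3) * (2 ^ (k : ℕ) - 1) :=
            mul_le_mul_of_nonneg_left hgeo (by linarith)
          have h6 : ((d : ℝ) + 3) * ((2:ℝ) ^ (k : ℕ) - 1)
              = ((d : ℝ) + 3) * 2 ^ (k : ℕ) - ((d : ℝ) + 3) := by ring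
          simp only [Finset.mem_univ, if_pos]
          linarith
        have hD : (1:ℝ) ≤ ∑ i, c i * (x i - y i) :=
          le_trans hsumL (Finset.sum_le_sum hLb)
        exact ⟨by linarith, fun h0 => absurd h0 (by linarith)⟩
  -- assemble
  set φ : (Fin d → ℝ) →ₗ[ℝ] ℝ := ∑ i, c i • LinearMap.proj i with hφdef
  have hφ : ∀ u : Fin d → ℝ, φ u = ∑ i, c i * u i := by
    intro u
    simp [hφdef, LinearMap.sum_apply, LinearMap.smul_apply, LinearMap.proj_apply, smul_eq_mul]
  set Lm : (Fin d → ℝ) →L[ℝ] ℝ := LinearMap.toContinuousLinearMap φ with hLm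
  have hLmapp : ∀ u, Lm u = ∑ i, c i * u i := by
    intro u
    have : Lm u = φ u := rfl
    rw [this, hφ]
  have hxP : x ∈ Pset v := subset_convexHull ℝ _ hxX
  have hzP : z ∈ Pset v := subset_convexHull ℝ _ hzX
  have hhalf : Pset v ⊆ {u | Lm u ≤ Lm x} := by
    rw [Pset]
    apply convexHull_min
    · intro u hu
      show Lm u ≤ Lm x
      rw [hLmapp, hLmapp]
      exact (hmain u hu).1
    · exact convex_halfSpace_le ⟨Lm.map_add, Lm.map_smul⟩ (Lm x)
  have hseg : segment ℝ x z = {u ∈ Pset v | ∀ y ∈ Pset v, Lm y ≤ Lm u} := by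
    apply Set.Subset.antisymm
    · intro u hu
      have huP : u ∈ Pset v :=
        (convex_convexHull ℝ (Xset v)).segment_subset hxP hzP hu
      refine ⟨huP, ?_⟩
      obtain ⟨θ1, θ2, h1, h2, hsum, rfl⟩ := hu
      intro y hyP
      have h3 : Lm y ≤ Lm x := hhalf hyP
      have h4 : Lm (θ1 • x + θ2 • z) = θ1 * Lm x + θ2 * Lm z := by
        simp [map_add, map_smul, smul_eq_mul]
      have h5 : Lm z = Lm x := by rw [hLmapp, hLmapp]; exact hfzx
      have h6 : θ1 * Lm x + θ2 * Lm x = Lm x := by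
        have : θ1 * Lm x + θ2 * Lm x = (θ1 + θ2) * Lm x := by ring
        rw [this, hsum, one_mul]
      rw [h4, h5, h6]
      exact h3
    · rintro u ⟨huP, humax⟩
      have hux : Lm u = Lm x := le_antisymm (hhalf huP) (humax x hxP)
      rw [Pset, _root_.convexHull_eq] at huP
      obtain ⟨ι, s, wt, pts, hw0, hw1, hpts, hcm⟩ := huP
      have hptsle : ∀ j ∈ s, Lm (pts j) ≤ Lm x := fun j hj => by
        rw [hLmapp, hLmapp]; exact (hmain _ (hpts j hj)).1
      have hkeyj : ∀ j ∈ s, wt j ≠ 0 → pts j ∈ ({x, z} : Set (Fin d → ℝ)) := by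
        intro j hj hwj
        have hwjpos : 0 < wt j := lt_of_le_of_ne (hw0 j hj) (Ne.symm hwj)
        by_contra hnot
        have hstrict : Lm (pts j) < Lm x := by
          rcases lt_or_eq_of_le (hptsle j hj) with h | h
          · exact h
          · exfalso
            have h' := (hmain _ (hpts j hj)).2 (by rw [hLmapp, hLmapp] at h; exact h)
            rcases h' with h' | h' <;> rw [h'] at hnot <;> simp at hnot
        have hLu : Lm u = ∑ j ∈ s, wt j * Lm (pts j) := by
          rw [← hcm, Finset.centerMass_eq_of_sum_1 _ _ hw1, map_sum]
          exact Finset.sum_congr rfl (fun j _ => by rw [map_smul, smul_eq_mul])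
        have hlt : ∑ j ∈ s, wt j * Lm (pts j) < ∑ j ∈ s, wt j * Lm x := by
          apply Finset.sum_lt_sum
          · intro j' hj'
            exact mul_le_mul_of_nonneg_left (hptsle j' hj') (hw0 j' hj')
          · exact ⟨j, hj, mul_lt_mul_of_pos_left hstrict hwjpos⟩
        have hsum2 : ∑ j ∈ s, wt j * Lm x = Lm x := by
          rw [← Finset.sum_mul, hw1, one_mul]
        rw [hLu] at hux
        linarith
      have hmem : u ∈ convexHull ℝ ({x, z} : Set (Fin d → ℝ)) := by
        rw [← hcm, ← Finset.centerMass_filter_ne_zero (w := wt) pts]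
        apply Finset.centerMass_mem_convexHull
        · intro j hj
          exact hw0 j (Finset.mem_of_mem_filter _ hj)
        · rw [Finset.sum_filter_ne_zero, hw1]
          norm_num
        · intro j hj
          rw [Finset.mem_filter] at hj
          exact hkeyj j hj.1 hj.2
      rwa [convexHull_pair] at hmem
  have hexp : IsExposed ℝ (Pset v) (segment ℝ x z) := fun _ => ⟨Lm, hseg⟩
  refine ⟨⟨convex_segment x z, hexp.isExtreme⟩, ?_⟩
  have hspan : affineSpan ℝ (segment ℝ x z) = affineSpan ℝ ({x, z} : Set (Fin d → ℝ)) := by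
    apply le_antisymm
    · rw [affineSpan_le]
      calc segment ℝ x z = convexHull ℝ ({x, z} : Set (Fin d → ℝ)) := (convexHull_pair x z).symm
        _ ⊆ ↑(affineSpan ℝ ({x, z} : Set (Fin d → ℝ))) := convexHull_subset_affineSpan _
    · apply affineSpan_mono
      rintro u hu
      rcases hu with rfl | hu
      · exact left_mem_segment ℝ u z
      · rw [Set.mem_singleton_iff] at hu
        rw [hu]
        exact right_mem_segment ℝ x z
  show Module.finrank ℝ (affineSpan ℝ (segment ℝ x z)).direction = 1
  rw [hspan, direction_affineSpan, vectorSpan_pair]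
  exact finrank_span_singleton (by rw [vsub_eq_sub]; exact sub_ne_zero.mpr hxz)
end
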